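/- arXiv:0807.2953 — 3 statements merged into one kernel-verified Lean document; each statement's English description precedes it below -/
import Mathlib

section
/- There exists a constant c > 0 such that for all natural numbers n ≥ 1, the Favard length of the n-th generation K_n of the four-corner Cantor set satisfies Fav(K_n) ≥ c/n. -/
open MeasureTheory Real Set

noncomputable section

/-- Digit value: `false ↦ 0`, `true ↦ 3`. -/
def dig (b : Bool) : ℝ := if b then 3 else 0

/-- Left endpoint `x_a = ∑ a_j 4^{-j}` of the interval coded by the word `a ∈ {0,3}^n`. -/
def cantorX {n : ℕ} (a : Fin n → Bool) : ℝ :=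
  ∑ j : Fin n, dig (a j) * (4 : ℝ) ^ (-((j : ℕ) + 1) : ℤ)

/-- The `n`-th generation `C_n` of the middle-half Cantor set. -/
def cantorC (n : ℕ) : Set ℝ :=
  ⋃ a : Fin n → Bool, Icc (cantorX a) (cantorX a + (4 : ℝ) ^ (-(n : ℤ)))

/-- The `n`-th generation `K_n = C_n × C_n` of the four-corner Cantor set. -/
def cantorK (n : ℕ) : Set (ℝ × ℝ) := cantorC n ×ˢ cantorC n

/-- The square `Q_{a,b}` of side `4^{-n}` of the `n`-th generation. -/
def cantorSq {n : ℕ} (a b : Fin n → Bool) : Set (ℝ × ℝ) :=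
  Icc (cantorX a) (cantorX a + (4 : ℝ) ^ (-(n : ℤ))) ×ˢ
    Icc (cantorX b) (cantorX b + (4 : ℝ) ^ (-(n : ℤ)))

/-- Orthogonal projection in direction `θ`: `proj_θ (x, y) = x cos θ + y sin θ`. -/
def projAngle (θ : ℝ) (p : ℝ × ℝ) : ℝ := p.1 * Real.cos θ + p.2 * Real.sin θ

/-- The Favard length of a planar set. -/
def favard (E : Set (ℝ × ℝ)) : ℝ :=
  (1 / π) * ∫ θ in (0 : ℝ)..π, (volume (projAngle θ '' E)).toReal

end


open scoped ENNReal

namespace FavProof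
noncomputable section

lemma dig_nonneg (b : Bool) : 0 ≤ dig b := by cases b <;> norm_num [dig]
lemma dig_le (b : Bool) : dig b ≤ 3 := by cases b <;> norm_num [dig]
lemma abs_dig_sub_le (b b' : Bool) : |dig b - dig b'| ≤ 3 := by
  cases b <;> cases b' <;> norm_num [dig]
lemma abs_dig_sub_of_ne {b b' : Bool} (h : b ≠ b') : |dig b - dig b'| = 3 := by
  cases b <;> cases b' <;> simp_all [dig]

lemma pow4 (k : ℕ) : (4:ℝ) ^ (-(k:ℤ)) = (1/4:ℝ)^k := by
  rw [zpow_neg, zpow_natCast, one_div, inv_pow]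

lemma cantorX_eq {n : ℕ} (a : Fin n → Bool) :
    cantorX a = ∑ j : Fin n, dig (a j) * (1/4:ℝ)^((j:ℕ)+1) := by
  unfold cantorX
  congr 1; funext j
  rw [show (-((j:ℕ) + 1) : ℤ) = -(((j:ℕ)+1 : ℕ) : ℤ) by push_cast; ring, pow4]

lemma geom_sum_q (n : ℕ) : ∑ j ∈ Finset.range n, (1/4:ℝ)^(j+1) = (1 - (1/4)^n)/3 := by
  induction n with
  | zero => simp
  | succ m ih => rw [Finset.sum_range_succ, ih]; ring

lemma cantorX_nonneg {n : ℕ} (a : Fin n → Bool) : 0 ≤ cantorX a := by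
  rw [cantorX_eq]
  apply Finset.sum_nonneg
  intro j _
  have := dig_nonneg (a j); positivity

lemma cantorX_le_one {n : ℕ} (a : Fin n → Bool) : cantorX a ≤ 1 := by
  rw [cantorX_eq]
  calc ∑ j : Fin n, dig (a j) * (1/4:ℝ)^((j:ℕ)+1)
      ≤ ∑ j : Fin n, 3 * (1/4:ℝ)^((j:ℕ)+1) := by
        apply Finset.sum_le_sum; intro j _
        have h := dig_le (a j); have : (0:ℝ) < (1/4:ℝ)^((j:ℕ)+1) := by positivity
        nlinarith
    _ = 3 * ∑ j ∈ Finset.range n, (1/4:ℝ)^(j+1) := by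
        rw [Finset.mul_sum, Fin.sum_univ_eq_sum_range (fun j => 3 * (1/4:ℝ)^(j+1))]
    _ = 1 - (1/4:ℝ)^n := by rw [geom_sum_q]; ring
    _ ≤ 1 := by have : (0:ℝ) ≤ (1/4:ℝ)^n := by positivity
                linarith


lemma cantorX_succ {n : ℕ} (a : Fin (n+1) → Bool) :
    cantorX a = dig (a 0) * (1/4) + (1/4) * cantorX (fun j : Fin n => a j.succ) := by
  rw [cantorX_eq, cantorX_eq, Fin.sum_univ_succ]
  simp only [Fin.val_zero, Fin.val_succ]
  congr 1
  · norm_num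
  · rw [Finset.mul_sum]
    apply Finset.sum_congr rfl
    intro j _
    ring

lemma gap : ∀ (k n : ℕ) (hk : k < n) (a a' : Fin n → Bool),
    (∀ (l : ℕ) (hl : l < k), a ⟨l, lt_trans hl hk⟩ = a' ⟨l, lt_trans hl hk⟩) →
    a ⟨k, hk⟩ ≠ a' ⟨k, hk⟩ → 2*(1/4:ℝ)^(k+1) ≤ |cantorX a - cantorX a'| := by
  intro k
  induction k with
  | zero =>
    intro n hk a a' _ hne
    obtain ⟨m, rfl⟩ : ∃ m, n = m + 1 := ⟨n - 1, by omega⟩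
    rw [cantorX_succ a, cantorX_succ a']
    have h0 : (⟨0, hk⟩ : Fin (m+1)) = 0 := rfl
    rw [h0] at hne
    have h1 : |(dig (a 0) - dig (a' 0)) * (1/4:ℝ)| = 3/4 := by
      rw [abs_mul, abs_dig_sub_of_ne hne]
      rw [abs_of_nonneg (by norm_num : (0:ℝ) ≤ (1/4:ℝ))]; norm_num
    set t := cantorX (fun j : Fin m => a j.succ) with ht
    set t' := cantorX (fun j : Fin m => a' j.succ) with ht'
    have h2 : |(1/4:ℝ) * (t - t')| ≤ 1/4 := by
      rw [abs_mul]
      have := cantorX_nonneg (fun j : Fin m => a j.succ)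
      have := cantorX_le_one (fun j : Fin m => a j.succ)
      have := cantorX_nonneg (fun j : Fin m => a' j.succ)
      have := cantorX_le_one (fun j : Fin m => a' j.succ)
      rw [abs_of_nonneg (by norm_num : (0:ℝ) ≤ (1/4:ℝ))]
      have habs : |t - t'| ≤ 1 := by rw [abs_le]; constructor <;> linarith
      nlinarith [abs_nonneg (t - t')]
    have key : dig (a 0) * (1/4) + (1/4) * t - (dig (a' 0) * (1/4) + (1/4) * t')
        = (dig (a 0) - dig (a' 0)) * (1/4) + (1/4) * (t - t') := by ring
    rw [key]
    have h3 : |(dig (a 0) - dig (a' 0)) * (1/4:ℝ)| - |(1/4:ℝ) * (t - t')| ≤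
        |(dig (a 0) - dig (a' 0)) * (1/4:ℝ) + (1/4:ℝ) * (t - t')| := by
      have := abs_sub_abs_le_abs_sub ((dig (a 0) - dig (a' 0)) * (1/4:ℝ)) (-((1/4:ℝ) * (t - t')))
      rw [abs_neg, sub_neg_eq_add] at this
      exact this
    rw [h1] at h3
    norm_num
    linarith
  | succ k ih =>
    intro n hk a a' hag hne
    obtain ⟨m, rfl⟩ : ∃ m, n = m + 1 := ⟨n - 1, by omega⟩
    have h0 : a 0 = a' 0 := by
      have := hag 0 (Nat.succ_pos k)
      simpa using this
    rw [cantorX_succ a, cantorX_succ a', h0]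
    have hkm : k < m := by omega
    have htail : 2*(1/4:ℝ)^(k+1) ≤
        |cantorX (fun j : Fin m => a j.succ) - cantorX (fun j : Fin m => a' j.succ)| := by
      apply ih m hkm
      · intro l hl
        have := hag (l+1) (by omega)
        simpa [Fin.succ_mk] using this
      · have : (⟨k, hkm⟩ : Fin m).succ = ⟨k+1, hk⟩ := by simp [Fin.succ_mk]
        simp only [this]
        exact hne
    have : dig (a' 0) * (1/4) + (1/4) * cantorX (fun j : Fin m => a j.succ)
        - (dig (a' 0) * (1/4) + (1/4) * cantorX (fun j : Fin m => a' j.succ))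
        = (1/4) * (cantorX (fun j : Fin m => a j.succ) - cantorX (fun j : Fin m => a' j.succ)) := by
      ring
    rw [this, abs_mul, abs_of_nonneg (by norm_num : (0:ℝ) ≤ (1/4:ℝ))]
    calc 2*(1/4:ℝ)^(k+1+1) = (1/4) * (2*(1/4:ℝ)^(k+1)) := by ring
    _ ≤ _ := by
        apply mul_le_mul_of_nonneg_left htail (by norm_num)

open Finset in
lemma count_words {n k : ℕ} (a : Fin n → Bool) :
    (Finset.univ.filter (fun a' : Fin n → Bool => ∀ l : Fin n, (l:ℕ) < k → a' l = a l)).card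
      ≤ 2^(n-k) := by
  classical
  have := Finset.card_le_card_of_injOn
    (f := fun (a' : Fin n → Bool) (m : Fin (n-k)) => a' ⟨k + (m:ℕ), by omega⟩)
    (s := Finset.univ.filter (fun a' : Fin n → Bool => ∀ l : Fin n, (l:ℕ) < k → a' l = a l))
    (t := (Finset.univ : Finset (Fin (n-k) → Bool)))
    (fun _ _ => Finset.mem_univ _) ?_
  · calc _ ≤ _ := this
      _ = 2^(n-k) := by simp [Finset.card_univ]
  · intro x hx y hy hxy
    simp only [Finset.coe_filter, Set.mem_setOf_eq, Finset.mem_univ, true_and] at hx hy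
    funext l
    by_cases hl : (l:ℕ) < k
    · rw [hx l hl, hy l hl]
    · have hlk : l = ⟨k + ((l:ℕ) - k), by omega⟩ := by
        apply Fin.ext; simp; omega
      rw [hlk]
      exact congrFun hxy ⟨(l:ℕ) - k, by omega⟩

abbrev Idx (n : ℕ) := (Fin n → Bool) × (Fin n → Bool)

def Dn (n : ℕ) : ℝ := (4 : ℝ) ^ (-(n : ℤ))

lemma Dn_pos (n : ℕ) : 0 < Dn n := by unfold Dn; positivity
lemma Dn_le_one (n : ℕ) : Dn n ≤ 1 := by
  unfold Dn
  apply zpow_le_one_of_nonpos₀ (by norm_num) (by omega)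

/-- width coefficient -/
def wco (θ : ℝ) : ℝ := |Real.cos θ| + |Real.sin θ|
/-- low corner offset coefficient -/
def lco (θ : ℝ) : ℝ := min (Real.cos θ) 0 + min (Real.sin θ) 0

lemma one_le_wco (θ : ℝ) : 1 ≤ wco θ := by
  have h1 := abs_cos_le_one θ
  have h2 := abs_sin_le_one θ
  have h3 := sin_sq_add_cos_sq θ
  have h4 := abs_nonneg (Real.sin θ)
  have h5 := abs_nonneg (Real.cos θ)
  have h6 := sq_abs (Real.sin θ)
  have h7 := sq_abs (Real.cos θ)
  unfold wco
  nlinarith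

lemma wco_le_two (θ : ℝ) : wco θ ≤ 2 := by
  have h1 := abs_cos_le_one θ
  have h2 := abs_sin_le_one θ
  unfold wco; linarith

lemma lco_bounds (θ : ℝ) : -2 ≤ lco θ ∧ lco θ ≤ 0 := by
  have h1 := abs_cos_le_one θ
  have h2 := abs_sin_le_one θ
  have h3 := neg_abs_le (Real.cos θ)
  have h4 := neg_abs_le (Real.sin θ)
  unfold lco
  constructor
  · have : -(1:ℝ) ≤ Real.cos θ := by linarith
    have : -(1:ℝ) ≤ Real.sin θ := by linarith
    have := le_min (by linarith : -(1:ℝ) ≤ Real.cos θ) (by norm_num : -(1:ℝ) ≤ (0:ℝ))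
    have := le_min (by linarith : -(1:ℝ) ≤ Real.sin θ) (by norm_num : -(1:ℝ) ≤ (0:ℝ))
    linarith
  · have := min_le_right (Real.cos θ) 0
    have := min_le_right (Real.sin θ) 0
    linarith

/-- helper: bounds for u*c when u ∈ [x, x+d] -/
lemma mul_corner_bounds {x u d c : ℝ} (h1 : x ≤ u) (h2 : u ≤ x + d) :
    x*c + d * min c 0 ≤ u*c ∧ u*c ≤ x*c + d * max c 0 := by
  rcases le_or_gt 0 c with hc | hc
  · rw [min_eq_right hc, max_eq_left hc]
    constructor <;> nlinarith
  · rw [min_eq_left hc.le, max_eq_right hc.le]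
    constructor <;> nlinarith

lemma image_square (θ x y : ℝ) {d : ℝ} (hd : 0 < d) :
    projAngle θ '' (Icc x (x+d) ×ˢ Icc y (y+d)) =
      Icc (x * Real.cos θ + y * Real.sin θ + d * lco θ)
        (x * Real.cos θ + y * Real.sin θ + d * lco θ + d * wco θ) := by
  set c := Real.cos θ
  set s := Real.sin θ
  ext z
  constructor
  · rintro ⟨⟨px, py⟩, ⟨⟨hx1, hx2⟩, ⟨hy1, hy2⟩⟩, rfl⟩
    have hb1 := mul_corner_bounds (c := c) hx1 hx2
    have hb2 := mul_corner_bounds (c := s) hy1 hy2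
    simp only [projAngle, mem_Icc]
    unfold lco wco
    have e1 : max c 0 - min c 0 = |c| := by
      rcases le_or_gt 0 c with h | h
      · rw [min_eq_right h, max_eq_left h, abs_of_nonneg h]; ring
      · rw [min_eq_left h.le, max_eq_right h.le, abs_of_neg h]; ring
    have e2 : max s 0 - min s 0 = |s| := by
      rcases le_or_gt 0 s with h | h
      · rw [min_eq_right h, max_eq_left h, abs_of_nonneg h]; ring
      · rw [min_eq_left h.le, max_eq_right h.le, abs_of_neg h]; ring
    constructor
    · nlinarith [hb1.1, hb2.1]
    · nlinarith [hb1.2, hb2.2, e1, e2]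
  · intro hz
    rw [mem_Icc] at hz
    have hw : (1:ℝ) ≤ wco θ := one_le_wco θ
    set T := d * wco θ with hT
    have hT0 : 0 < T := by unfold T; nlinarith
    set lam := (z - (x*c + y*s + d * lco θ)) / T with hlam
    have hlam0 : 0 ≤ lam := by
      apply div_nonneg _ hT0.le; linarith [hz.1]
    have hlam1 : lam ≤ 1 := by
      rw [div_le_one hT0]; linarith [hz.2]
    refine ⟨(x + d * (if 0 ≤ c then lam else 1 - lam),
             y + d * (if 0 ≤ s then lam else 1 - lam)), ⟨⟨?_, ?_⟩, ?_, ?_⟩, ?_⟩ <;> dsimp -failIfUnchanged only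
    · split_ifs <;> nlinarith
    · split_ifs <;> nlinarith
    · split_ifs <;> nlinarith
    · split_ifs <;> nlinarith
    · simp only [projAngle]
      have key1 : c * (if 0 ≤ c then lam else 1 - lam) = min c 0 + lam * |c| := by
        split_ifs with h
        · rw [min_eq_right h, abs_of_nonneg h]; ring
        · push_neg at h
          rw [min_eq_left h.le, abs_of_neg h]; ring
      have key2 : s * (if 0 ≤ s then lam else 1 - lam) = min s 0 + lam * |s| := by
        split_ifs with h
        · rw [min_eq_right h, abs_of_nonneg h]; ring
        · push_neg at h
          rw [min_eq_left h.le, abs_of_neg h]; ring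
      have : (x + d * (if 0 ≤ c then lam else 1 - lam)) * c +
             (y + d * (if 0 ≤ s then lam else 1 - lam)) * s
           = x*c + y*s + d * lco θ + lam * T := by
        rw [hT]
        unfold lco wco
        nlinarith [key1, key2]
      rw [this, hlam]
      field_simp
      ring
  
def corner {n : ℕ} (θ : ℝ) (i : Idx n) : ℝ :=
  cantorX i.1 * Real.cos θ + cantorX i.2 * Real.sin θ

def endA {n : ℕ} (θ : ℝ) (i : Idx n) : ℝ := corner θ i + Dn n * lco θ

lemma cantorK_eq_iUnion (n : ℕ) : cantorK n = ⋃ i : Idx n, cantorSq i.1 i.2 := by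
  ext p
  simp only [cantorK, cantorC, cantorSq, mem_prod, mem_iUnion]
  constructor
  · rintro ⟨⟨a, ha⟩, ⟨b, hb⟩⟩
    exact ⟨(a, b), ha, hb⟩
  · rintro ⟨⟨a, b⟩, ha, hb⟩
    exact ⟨⟨a, ha⟩, ⟨b, hb⟩⟩

lemma image_cantorK (n : ℕ) (θ : ℝ) :
    projAngle θ '' cantorK n =
      ⋃ i : Idx n, Icc (endA θ i) (endA θ i + Dn n * wco θ) := by
  rw [cantorK_eq_iUnion, image_iUnion]
  apply iUnion_congr
  intro i
  have := image_square θ (cantorX i.1) (cantorX i.2) (Dn_pos n)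
  unfold cantorSq endA corner Dn
  rw [show ((4:ℝ) ^ (-(n:ℤ))) = Dn n from rfl] at *
  rw [this]


lemma Dn_eq (n : ℕ) : Dn n = (1/4:ℝ)^n := pow4 n
lemma corner_eq {n : ℕ} (θ : ℝ) (i : Idx n) :
    corner θ i = cantorX i.1 * Real.cos θ + cantorX i.2 * Real.sin θ := rfl
lemma endA_eq {n : ℕ} (θ : ℝ) (i : Idx n) : endA θ i = corner θ i + Dn n * lco θ := rfl
lemma wco_eq (θ : ℝ) : wco θ = |Real.cos θ| + |Real.sin θ| := rfl
lemma lco_eq (θ : ℝ) : lco θ = min (Real.cos θ) 0 + min (Real.sin θ) 0 := rfl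

lemma arctan_lipschitz : LipschitzWith 1 Real.arctan := by
  have : ∀ x : ℝ, ‖deriv Real.arctan x‖₊ ≤ 1 := by
    intro x
    rw [Real.deriv_arctan]
    rw [show (fun x : ℝ => 1 / (1 + x^2)) x = 1/(1+x^2) from rfl]
    have h1 : (0:ℝ) < 1 + x^2 := by positivity
    have : |1/(1+x^2)| ≤ 1 := by
      rw [abs_of_nonneg (by positivity)]
      rw [div_le_one h1]; nlinarith
    exact_mod_cast this
  exact lipschitzWith_of_nnnorm_deriv_le Real.differentiable_arctan this

lemma abs_arctan_sub (a b : ℝ) : |Real.arctan a - Real.arctan b| ≤ |a - b| := by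
  have := arctan_lipschitz.dist_le_mul a b
  simpa [Real.dist_eq] using this

/-- the angle interval -/
def angI : Set ℝ := Ioc (π/4) (Real.arctan 2)

lemma angI_eq : angI = Ioc (π/4) (Real.arctan 2) := rfl

lemma pi4_lt_arctan2 : π/4 < Real.arctan 2 := by
  rw [← Real.arctan_one]
  exact Real.arctan_strictMono (by norm_num)

lemma arctan2_lt_pi2 : Real.arctan 2 < π/2 := Real.arctan_lt_pi_div_two 2

lemma cos_ge_on_angI {θ : ℝ} (hθ : θ ∈ angI) : 1/3 ≤ Real.cos θ := by
  obtain ⟨h1, h2⟩ := hθ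
  have hπ := Real.pi_gt_three
  have h3 : Real.cos θ ≥ Real.cos (Real.arctan 2) := by
    apply Real.cos_le_cos_of_nonneg_of_le_pi
    · linarith
    · linarith [arctan2_lt_pi2, Real.pi_pos]
    · exact h2
  have h4 : Real.cos (Real.arctan 2) = 1 / Real.sqrt (1 + 2^2) := Real.cos_arctan 2
  have h5 : Real.sqrt (1 + 2^2) ≤ 3 := by
    rw [show (1:ℝ) + 2^2 = 5 by norm_num]
    rw [show (3:ℝ) = Real.sqrt 9 by rw [show (9:ℝ) = 3^2 by norm_num]; exact (Real.sqrt_sq (by norm_num)).symm]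
    exact Real.sqrt_le_sqrt (by norm_num)
  have h6 : (0:ℝ) < Real.sqrt (1 + 2^2) := Real.sqrt_pos.mpr (by norm_num)
  have : (1:ℝ)/3 ≤ 1 / Real.sqrt (1 + 2^2) := one_div_le_one_div_of_le h6 h5
  linarith
  
lemma tan_mem_on_angI {θ : ℝ} (hθ : θ ∈ angI) : 1 < Real.tan θ ∧ Real.tan θ ≤ 2 := by
  obtain ⟨h1, h2⟩ := hθ
  have hπ := Real.pi_pos
  constructor
  · rw [show (1:ℝ) = Real.tan (π/4) from (Real.tan_pi_div_four).symm]
    apply Real.tan_lt_tan_of_nonneg_of_lt_pi_div_two (by linarith) _ h1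
    linarith [arctan2_lt_pi2]
  · rw [show (2:ℝ) = Real.tan (Real.arctan 2) from (Real.tan_arctan 2).symm]
    rcases eq_or_lt_of_le h2 with h | h
    · rw [h]
    · apply le_of_lt
      apply Real.tan_lt_tan_of_nonneg_of_lt_pi_div_two (by linarith) arctan2_lt_pi2 h

lemma arctan_tan_on_angI {θ : ℝ} (hθ : θ ∈ angI) : Real.arctan (Real.tan θ) = θ := by
  obtain ⟨h1, h2⟩ := hθ
  have hπ := Real.pi_pos
  apply Real.arctan_tan
  · linarith
  · linarith [arctan2_lt_pi2]

/-- Per-pair bad-angle measure bound. -/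
lemma badpair {v1 v2 ρ : ℝ} (hρ : 0 < ρ) (hd : 12 * ρ ≤ max |v1| |v2|) :
    volume {θ ∈ angI | |v1 * Real.cos θ + v2 * Real.sin θ| ≤ ρ} ≤
      ENNReal.ofReal (48 * ρ / max |v1| |v2|) := by
  set d := max |v1| |v2| with hddef
  have hd0 : 0 < d := by
    have : (0:ℝ) < 12 * ρ := by linarith
    linarith
  set B := {θ ∈ angI | |v1 * Real.cos θ + v2 * Real.sin θ| ≤ ρ} with hB
  -- the key reduction: for θ ∈ B, |v1 + tanθ * v2| ≤ 3ρ
  have hkey : ∀ θ ∈ B, |v1 + Real.tan θ * v2| ≤ 3 * ρ := by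
    rintro θ ⟨hθI, hθb⟩
    have hc := cos_ge_on_angI hθI
    have hc0 : 0 < Real.cos θ := by linarith
    have e : v1 + Real.tan θ * v2 = (v1 * Real.cos θ + v2 * Real.sin θ) / Real.cos θ := by
      rw [Real.tan_eq_sin_div_cos]
      field_simp
    rw [e, abs_div, abs_of_pos hc0, div_le_iff₀ hc0]
    calc |v1 * Real.cos θ + v2 * Real.sin θ| ≤ ρ := hθb
      _ = 3 * ρ * (1/3) := by ring
      _ ≤ 3 * ρ * Real.cos θ := by nlinarith
  -- case on emptiness
  rcases Set.eq_empty_or_nonempty B with hBe | ⟨θ₀, hθ₀⟩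
  · rw [hBe]
    simp
  -- case |v2| small: B must be empty (contradiction), else diameter bound
  have hv2 : d/4 ≤ |v2| := by
    by_contra hv2
    push_neg at hv2
    have hv1 : |v1| = d := by
      rcases max_cases |v1| |v2| with ⟨h, _⟩ | ⟨h, h'⟩
      · exact h ▸ rfl
      · linarith [hddef ▸ h]
    have ht := tan_mem_on_angI hθ₀.1
    have := hkey θ₀ hθ₀
    have habs : |v1 + Real.tan θ₀ * v2| ≥ |v1| - |Real.tan θ₀ * v2| := by
      have := abs_sub_abs_le_abs_sub v1 (-(Real.tan θ₀ * v2))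
      rw [abs_neg, sub_neg_eq_add] at this
      linarith
    have h2 : |Real.tan θ₀ * v2| ≤ 2 * |v2| := by
      rw [abs_mul]
      have : |Real.tan θ₀| ≤ 2 := by
        rw [abs_of_pos (by linarith [ht.1] : 0 < Real.tan θ₀)]
        exact ht.2
      nlinarith [abs_nonneg v2]
    nlinarith
  -- diameter bound
  have hdiam : ∀ θ ∈ B, |θ - θ₀| ≤ 24 * ρ / d := by
    intro θ hθ
    have h1 := hkey θ hθ
    have h0 := hkey θ₀ hθ₀
    have hv20 : 0 < |v2| := by linarith
    have htan : |Real.tan θ - Real.tan θ₀| ≤ 6 * ρ / |v2| := by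
      rw [le_div_iff₀ hv20]
      have : (Real.tan θ - Real.tan θ₀) * v2 = (v1 + Real.tan θ * v2) - (v1 + Real.tan θ₀ * v2) := by ring
      calc |Real.tan θ - Real.tan θ₀| * |v2| = |(Real.tan θ - Real.tan θ₀) * v2| := (abs_mul _ _).symm
        _ = |(v1 + Real.tan θ * v2) - (v1 + Real.tan θ₀ * v2)| := by rw [this]
        _ ≤ |v1 + Real.tan θ * v2| + |v1 + Real.tan θ₀ * v2| := abs_sub _ _
        _ ≤ 6 * ρ := by linarith
    have harc : |θ - θ₀| = |Real.arctan (Real.tan θ) - Real.arctan (Real.tan θ₀)| := by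
      rw [arctan_tan_on_angI hθ.1, arctan_tan_on_angI hθ₀.1]
    rw [harc]
    calc |Real.arctan (Real.tan θ) - Real.arctan (Real.tan θ₀)| ≤ |Real.tan θ - Real.tan θ₀| :=
          abs_arctan_sub _ _
      _ ≤ 6 * ρ / |v2| := htan
      _ ≤ 24 * ρ / d := by
          rw [div_le_div_iff₀ hv20 hd0]
          nlinarith
  have hsub : B ⊆ Icc (θ₀ - 24 * ρ / d) (θ₀ + 24 * ρ / d) := by
    intro θ hθ
    have := hdiam θ hθ
    rw [abs_le] at this
    constructor <;> [linarith [this.1]; linarith [this.2]]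
  calc volume B ≤ volume (Icc (θ₀ - 24 * ρ / d) (θ₀ + 24 * ρ / d)) := measure_mono hsub
    _ = ENNReal.ofReal (48 * ρ / d) := by
        rw [Real.volume_Icc]
        congr 1
        ring



-- stand-ins for already-proved material

def Ncnt (n : ℕ) (θ : ℝ) : ℝ≥0∞ :=
  ∑ p : Idx n × Idx n, if |corner θ p.1 - corner θ p.2| ≤ 2 * Dn n then 1 else 0

lemma card_Idx (n : ℕ) : (Fintype.card (Idx n) : ℝ) = 4^n := by
  simp only [Fintype.card_prod, Fintype.card_fun, Fintype.card_bool, Fintype.card_fin]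
  push_cast
  rw [← mul_pow]
  norm_num

lemma stepA (n : ℕ) (θ : ℝ) :
    ENNReal.ofReal ((4:ℝ)^n * Dn n) ^ 2 ≤
      volume (projAngle θ '' cantorK n) * (ENNReal.ofReal (2 * Dn n) * Ncnt n θ) := by
  classical
  set w : ℝ := Dn n * wco θ with hwdef
  have hDn := Dn_pos n
  have hw1 : Dn n ≤ w := by nlinarith [one_le_wco θ]
  have hw2 : w ≤ 2 * Dn n := by nlinarith [wco_le_two θ]
  have hw0 : 0 < w := by linarith
  set I : Idx n → Set ℝ := fun i => Icc (endA θ i) (endA θ i + w) with hIdef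
  set U : Set ℝ := ⋃ i : Idx n, I i with hUdef
  have hU : projAngle θ '' cantorK n = U := image_cantorK n θ
  have hUm : MeasurableSet U := MeasurableSet.iUnion (fun i => measurableSet_Icc)
  set f : ℝ → ℝ≥0∞ := fun z => ∑ i : Idx n, (I i).indicator (fun _ => (1:ℝ≥0∞)) z with hfdef
  have hfmeas : Measurable f := by
    apply Finset.measurable_sum
    intro i _
    exact measurable_one.indicator measurableSet_Icc
  set g : ℝ → ℝ≥0∞ := U.indicator (fun _ => (1:ℝ≥0∞)) with hgdef
  have hgmeas : Measurable g := measurable_one.indicator hUm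
  have hfg : ∀ z, f z = f z * g z := by
    intro z
    by_cases hz : z ∈ U
    · rw [hgdef, Set.indicator_of_mem hz, mul_one]
    · have : f z = 0 := by
        apply Finset.sum_eq_zero
        intro i _
        apply Set.indicator_of_notMem
        intro hmem
        exact hz (Set.mem_iUnion.mpr ⟨i, hmem⟩)
      rw [this, zero_mul]
  have hf_int : ∫⁻ z, f z = (Fintype.card (Idx n) : ℝ≥0∞) * ENNReal.ofReal w := by
    rw [lintegral_finset_sum]
    · have : ∀ i : Idx n, ∫⁻ z, (I i).indicator (fun _ => (1:ℝ≥0∞)) z = ENNReal.ofReal w := by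
        intro i
        rw [lintegral_indicator measurableSet_Icc, setLIntegral_one]
        simp [hIdef, Real.volume_Icc]
      simp only [this, Finset.sum_const, Finset.card_univ, nsmul_eq_mul]
    · intro i _
      exact measurable_one.indicator measurableSet_Icc
  -- bound on ∫ f²
  have hf2 : ∫⁻ z, f z * f z ≤ ENNReal.ofReal (2 * Dn n) * Ncnt n θ := by
    have expand : ∀ z, f z * f z =
        ∑ p : Idx n × Idx n, ((I p.1 ∩ I p.2).indicator (fun _ => (1:ℝ≥0∞)) z) := by
      intro z
      rw [hfdef]
      rw [Fintype.sum_prod_type]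
      rw [Finset.sum_mul_sum]
      apply Finset.sum_congr rfl; intro i _
      apply Finset.sum_congr rfl; intro j _
      rw [← Set.inter_indicator_mul]
      simp
    calc ∫⁻ z, f z * f z
        = ∑ p : Idx n × Idx n, volume (I p.1 ∩ I p.2) := by
          simp_rw [expand]
          rw [lintegral_finset_sum]
          · apply Finset.sum_congr rfl
            intro p _
            rw [lintegral_indicator (measurableSet_Icc.inter measurableSet_Icc), setLIntegral_one]
          · intro p _
            exact measurable_one.indicator (measurableSet_Icc.inter measurableSet_Icc)
      _ ≤ ∑ p : Idx n × Idx n,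
            (if |corner θ p.1 - corner θ p.2| ≤ 2 * Dn n then ENNReal.ofReal (2 * Dn n) else 0) := by
          apply Finset.sum_le_sum
          intro p _
          by_cases hc : |corner θ p.1 - corner θ p.2| ≤ 2 * Dn n
          · rw [if_pos hc]
            calc volume (I p.1 ∩ I p.2) ≤ volume (I p.1) := measure_mono inter_subset_left
              _ = ENNReal.ofReal w := by simp [hIdef, Real.volume_Icc]
              _ ≤ ENNReal.ofReal (2 * Dn n) := ENNReal.ofReal_le_ofReal hw2
          · rw [if_neg hc]
            have hemp : I p.1 ∩ I p.2 = ∅ := by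
              rw [Set.eq_empty_iff_forall_notMem]
              rintro z ⟨⟨h1, h2⟩, h3, h4⟩
              apply hc
              have e1 : endA θ p.1 - endA θ p.2 = corner θ p.1 - corner θ p.2 := by
                rw [endA_eq, endA_eq]; ring
              rw [← e1]
              rw [abs_le]
              constructor <;> linarith
            rw [hemp]
            simp
      _ = ENNReal.ofReal (2 * Dn n) * Ncnt n θ := by
          rw [Ncnt, Finset.mul_sum]
          apply Finset.sum_congr rfl
          intro p _
          rw [mul_ite, mul_one, mul_zero]
  -- Hölder
  have hconj : Real.HolderConjugate 2 2 := ⟨by norm_num, by norm_num, by norm_num⟩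
  have hHold := ENNReal.lintegral_mul_le_Lp_mul_Lq volume hconj hfmeas.aemeasurable hgmeas.aemeasurable
  have hg2 : ∫⁻ z, g z ^ (2:ℝ) = volume U := by
    have : ∀ z, g z ^ (2:ℝ) = g z := by
      intro z
      rw [hgdef]
      by_cases hz : z ∈ U
      · rw [Set.indicator_of_mem hz]
        simp [ENNReal.one_rpow]
      · rw [Set.indicator_of_notMem hz]
        rw [ENNReal.zero_rpow_of_pos (by norm_num)]
    simp_rw [this]
    rw [hgdef, lintegral_indicator hUm, setLIntegral_one]
  have hf2' : ∫⁻ z, f z ^ (2:ℝ) ≤ ENNReal.ofReal (2 * Dn n) * Ncnt n θ := by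
    have : ∀ z, f z ^ (2:ℝ) = f z * f z := by
      intro z
      rw [show (2:ℝ) = ((2:ℕ):ℝ) by norm_num, ENNReal.rpow_natCast]
      ring
    simp_rw [this]
    exact hf2
  -- start of the chain
  have hXf : ENNReal.ofReal ((4:ℝ)^n * Dn n) ≤ ∫⁻ z, f z := by
    rw [hf_int]
    rw [ENNReal.ofReal_mul (by positivity)]
    have hcard : Fintype.card (Idx n) = 4^n := by
      simp only [Fintype.card_prod, Fintype.card_fun, Fintype.card_bool, Fintype.card_fin]
      rw [← mul_pow]; norm_num
    have h1 : ENNReal.ofReal ((4:ℝ)^n) = (Fintype.card (Idx n) : ℝ≥0∞) := by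
      rw [hcard, show ((4:ℝ)^n) = (((4^n : ℕ)) : ℝ) by push_cast; ring,
        ENNReal.ofReal_natCast]
    rw [h1]
    exact mul_le_mul_right (ENNReal.ofReal_le_ofReal hw1) _
  have key : ENNReal.ofReal ((4:ℝ)^n * Dn n) ≤
      (∫⁻ z, f z ^ (2:ℝ)) ^ (1/(2:ℝ)) * (volume U) ^ (1/(2:ℝ)) := by
    calc ENNReal.ofReal ((4:ℝ)^n * Dn n) ≤ ∫⁻ z, f z := hXf
      _ = ∫⁻ z, (f * g) z := by congr 1; funext z; exact hfg z
      _ ≤ (∫⁻ z, f z ^ (2:ℝ)) ^ (1/(2:ℝ)) * (∫⁻ z, g z ^ (2:ℝ)) ^ (1/(2:ℝ)) := hHold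
      _ = _ := by rw [hg2]
  calc ENNReal.ofReal ((4:ℝ)^n * Dn n) ^ 2
      ≤ ((∫⁻ z, f z ^ (2:ℝ)) ^ (1/(2:ℝ)) * (volume U) ^ (1/(2:ℝ)))^2 :=
        pow_le_pow_left₀ zero_le key 2
    _ = (∫⁻ z, f z ^ (2:ℝ)) * volume U := by
        rw [mul_pow]
        congr 1
        · rw [← ENNReal.rpow_natCast ((∫⁻ z, f z ^ (2:ℝ)) ^ (1/(2:ℝ))) 2, ← ENNReal.rpow_mul]
          norm_num
        · rw [← ENNReal.rpow_natCast ((volume U) ^ (1/(2:ℝ))) 2, ← ENNReal.rpow_mul]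
          norm_num
    _ ≤ (ENNReal.ofReal (2 * Dn n) * Ncnt n θ) * volume U := by gcongr
    _ = volume (projAngle θ '' cantorK n) * (ENNReal.ofReal (2 * Dn n) * Ncnt n θ) := by
        rw [hU]; ring




/-- Bad angle set of a pair of squares. -/
def Bad (n : ℕ) (p : Idx n × Idx n) : Set ℝ :=
  {θ ∈ angI | |corner θ p.1 - corner θ p.2| ≤ 2 * Dn n}

/-- agreement of the words of a pair up to position `k`. -/
def agree (n k : ℕ) (p : Idx n × Idx n) : Prop :=
  (∀ l : Fin n, (l:ℕ) < k → p.2.1 l = p.1.1 l) ∧ (∀ l : Fin n, (l:ℕ) < k → p.2.2 l = p.1.2 l)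

instance (n k : ℕ) (p : Idx n × Idx n) : Decidable (agree n k p) := by
  unfold agree; infer_instance

lemma perpair (n : ℕ) (p : Idx n × Idx n) :
    volume (Bad n p) ≤
      (∑ k ∈ Finset.range (n+1),
        (if agree n k p then ENNReal.ofReal (192 * Dn n * (4:ℝ)^k) else 0))
      + (if agree n (n-2) p then (1:ℝ≥0∞) else 0) := by
  classical
  by_cases hA : agree n (n-2) p
  · -- trivial bound by the measure of angI
    have h1 : volume (Bad n p) ≤ volume angI := measure_mono (fun θ hθ => hθ.1)
    have h2 : volume angI ≤ 1 := by
      rw [angI_eq, Real.volume_Ioc]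
      have hπ4 : Real.arctan 2 - π/4 ≤ 1 := by
        have := arctan2_lt_pi2
        have h4 := Real.pi_le_four
        linarith
      calc ENNReal.ofReal (Real.arctan 2 - π/4) ≤ ENNReal.ofReal 1 :=
            ENNReal.ofReal_le_ofReal hπ4
        _ = 1 := ENNReal.ofReal_one
    rw [if_pos hA]
    calc volume (Bad n p) ≤ 1 := le_trans h1 h2
      _ ≤ _ := le_add_self
  · -- there is a difference at some index < n-2
    have hP : ∃ k, ∃ hk : k < n,
        (p.2.1 ⟨k, hk⟩ ≠ p.1.1 ⟨k, hk⟩ ∨ p.2.2 ⟨k, hk⟩ ≠ p.1.2 ⟨k, hk⟩) := by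
      unfold agree at hA
      by_contra hno
      push_neg at hno
      exact hA ⟨fun l _ => (hno l l.isLt).1, fun l _ => (hno l l.isLt).2⟩
    -- moreover some difference occurs below n-2
    have hPsmall : ∃ l : Fin n, (l:ℕ) < n - 2 ∧
        (p.2.1 l ≠ p.1.1 l ∨ p.2.2 l ≠ p.1.2 l) := by
      unfold agree at hA
      by_contra hno
      push_neg at hno
      refine hA ⟨fun l hl => ?_, fun l hl => ?_⟩
      · by_contra hne
        rcases hno l hl with ⟨h1, _⟩
        · exact hne h1
      · by_contra hne
        rcases hno l hl with ⟨_, h2⟩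
        · exact hne h2
    classical
    set k₀ := Nat.find hP with hk₀def
    obtain ⟨hk₀n, hdiff⟩ := Nat.find_spec hP
    obtain ⟨lw, hlw, hlwd⟩ := hPsmall
    have hk₀small : k₀ ≤ (lw:ℕ) := by
      apply Nat.find_min' hP
      exact ⟨lw.isLt, by simpa using hlwd⟩
    have hk₀3 : k₀ + 1 ≤ n - 2 := by omega
    have hn3 : 3 ≤ n := by omega
    have hagree : ∀ (l : ℕ) (hl : l < k₀),
        p.2.1 ⟨l, lt_trans hl hk₀n⟩ = p.1.1 ⟨l, lt_trans hl hk₀n⟩ ∧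
        p.2.2 ⟨l, lt_trans hl hk₀n⟩ = p.1.2 ⟨l, lt_trans hl hk₀n⟩ := by
      intro l hl
      have := Nat.find_min hP hl
      push_neg at this
      obtain ⟨h1, h2⟩ := this (lt_trans hl hk₀n)
      exact ⟨h1, h2⟩
    -- gap on the differing coordinate
    set v1 := cantorX p.1.1 - cantorX p.2.1 with hv1
    set v2 := cantorX p.1.2 - cantorX p.2.2 with hv2
    have hgap : 2*(1/4:ℝ)^(k₀+1) ≤ max |v1| |v2| := by
      rcases hdiff with hd1 | hd1
      · have := gap k₀ n hk₀n p.2.1 p.1.1 (fun l hl => (hagree l hl).1) hd1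
        calc 2*(1/4:ℝ)^(k₀+1) ≤ |cantorX p.2.1 - cantorX p.1.1| := this
          _ = |v1| := by rw [hv1, abs_sub_comm]
          _ ≤ max |v1| |v2| := le_max_left _ _
      · have := gap k₀ n hk₀n p.2.2 p.1.2 (fun l hl => (hagree l hl).2) hd1
        calc 2*(1/4:ℝ)^(k₀+1) ≤ |cantorX p.2.2 - cantorX p.1.2| := this
          _ = |v2| := by rw [hv2, abs_sub_comm]
          _ ≤ max |v1| |v2| := le_max_right _ _
    have hDn := Dn_pos n
    have hρ : (0:ℝ) < 2 * Dn n := by linarith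
    have hpow : 16 * Dn n ≤ (1/4:ℝ)^(k₀+1) := by
      rw [Dn_eq]
      have h1 : (1/4:ℝ)^n = (1/4:ℝ)^(k₀+1) * (1/4:ℝ)^(n - (k₀+1)) := by
        rw [← pow_add]
        congr 1
        omega
      have h2 : (1/4:ℝ)^(n-(k₀+1)) ≤ (1/4:ℝ)^2 := by
        apply pow_le_pow_of_le_one (by norm_num) (by norm_num)
        omega
      have h3 : (0:ℝ) < (1/4:ℝ)^(k₀+1) := by positivity
      calc 16 * (1/4:ℝ)^n = 16 * ((1/4:ℝ)^(k₀+1) * (1/4:ℝ)^(n-(k₀+1))) := by rw [h1]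
        _ ≤ 16 * ((1/4:ℝ)^(k₀+1) * (1/4:ℝ)^2) := by nlinarith
        _ = (1/4:ℝ)^(k₀+1) := by ring
    have hd12 : 12 * (2 * Dn n) ≤ max |v1| |v2| := by
      calc 12 * (2 * Dn n) = 24 * Dn n := by ring
        _ ≤ 2 * (16 * Dn n) := by linarith
        _ ≤ 2 * (1/4:ℝ)^(k₀+1) := by linarith
        _ ≤ max |v1| |v2| := hgap
    have hBad_eq : Bad n p = {θ ∈ angI | |v1 * Real.cos θ + v2 * Real.sin θ| ≤ 2 * Dn n} := by
      unfold Bad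
      ext θ
      simp only [Set.mem_setOf_eq, corner_eq]
      constructor
      · rintro ⟨h1, h2⟩
        refine ⟨h1, ?_⟩
        convert h2 using 2
        rw [hv1, hv2]; ring
      · rintro ⟨h1, h2⟩
        refine ⟨h1, ?_⟩
        convert h2 using 2
        rw [hv1, hv2]; ring
    have hbp := badpair hρ hd12
    rw [hBad_eq]
    have hmax0 : 0 < max |v1| |v2| := lt_of_lt_of_le (by linarith) hd12
    have hfinal : 48 * (2 * Dn n) / max |v1| |v2| ≤ 192 * Dn n * (4:ℝ)^k₀ := by
      rw [div_le_iff₀ hmax0]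
      have hq : (1/4:ℝ)^(k₀+1) * (4:ℝ)^(k₀+1) = 1 := by
        rw [← mul_pow]; norm_num
      have h48 : 48 * (2 * Dn n) = 192 * Dn n * (4:ℝ)^k₀ * (2 * (1/4:ℝ)^(k₀+1)) := by
        have : (4:ℝ)^k₀ * (1/4:ℝ)^(k₀+1) = 1/4 := by
          have : (4:ℝ)^(k₀+1) = 4 * (4:ℝ)^k₀ := by ring
          nlinarith [hq]
        nlinarith [this]
      rw [h48]
      apply mul_le_mul_of_nonneg_left _ (by positivity)
      linarith [hgap]
    have hagree_k₀ : agree n k₀ p :=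
      ⟨fun l hl => by
          have := (hagree (l:ℕ) hl).1
          convert this using 2
        , fun l hl => by
          have := (hagree (l:ℕ) hl).2
          convert this using 2⟩
    calc volume {θ ∈ angI | |v1 * Real.cos θ + v2 * Real.sin θ| ≤ 2 * Dn n}
        ≤ ENNReal.ofReal (48 * (2 * Dn n) / max |v1| |v2|) := hbp
      _ ≤ ENNReal.ofReal (192 * Dn n * (4:ℝ)^k₀) := ENNReal.ofReal_le_ofReal hfinal
      _ ≤ ∑ k ∈ Finset.range (n+1),
            (if agree n k p then ENNReal.ofReal (192 * Dn n * (4:ℝ)^k) else 0) := by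
          have hk₀mem : k₀ ∈ Finset.range (n+1) := Finset.mem_range.mpr (by omega)
          have := Finset.single_le_sum
            (f := fun k => if agree n k p then ENNReal.ofReal (192 * Dn n * (4:ℝ)^k) else 0)
            (fun k _ => zero_le) hk₀mem
          simpa [hagree_k₀] using this
      _ ≤ _ := le_add_right (le_refl _)

lemma count_pairs (n k : ℕ) (i : Idx n) :
    ((Finset.univ : Finset (Idx n)).filter
      (fun j => (∀ l : Fin n, (l:ℕ) < k → j.1 l = i.1 l) ∧
                (∀ l : Fin n, (l:ℕ) < k → j.2 l = i.2 l))).card ≤ 4^(n-k) := by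
  classical
  have hsub : (Finset.univ : Finset (Idx n)).filter
      (fun j => (∀ l : Fin n, (l:ℕ) < k → j.1 l = i.1 l) ∧
                (∀ l : Fin n, (l:ℕ) < k → j.2 l = i.2 l)) ⊆
      ((Finset.univ.filter (fun a' : Fin n → Bool => ∀ l : Fin n, (l:ℕ) < k → a' l = i.1 l)) ×ˢ
       (Finset.univ.filter (fun a' : Fin n → Bool => ∀ l : Fin n, (l:ℕ) < k → a' l = i.2 l))) := by
    intro j hj
    rw [Finset.mem_filter] at hj
    rw [Finset.mem_product, Finset.mem_filter, Finset.mem_filter]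
    exact ⟨⟨Finset.mem_univ _, hj.2.1⟩, ⟨Finset.mem_univ _, hj.2.2⟩⟩
  calc _ ≤ _ := Finset.card_le_card hsub
    _ = _ * _ := Finset.card_product _ _
    _ ≤ 2^(n-k) * 2^(n-k) := Nat.mul_le_mul (count_words i.1) (count_words i.2)
    _ = 4^(n-k) := by rw [← mul_pow]; norm_num

lemma sum_bad (n : ℕ) (hn : 1 ≤ n) :
    ∑ p : Idx n × Idx n, volume (Bad n p) ≤ (4:ℝ≥0∞)^n * ENNReal.ofReal (400 * n) := by
  classical
  have hcard : (Finset.univ : Finset (Idx n)).card = 4^n := by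
    simp only [Finset.card_univ, Fintype.card_prod, Fintype.card_fun, Fintype.card_bool,
      Fintype.card_fin]
    rw [← mul_pow]; norm_num
  have hDn := Dn_pos n
  have hc4 : ((4^n : ℕ) : ℝ≥0∞) = (4:ℝ≥0∞)^n := by push_cast; ring
  -- generic inner-sum counting bound
  have inner_gen : ∀ (k : ℕ) (C : ℝ≥0∞) (i : Idx n),
      (∑ j : Idx n, if agree n k (i, j) then C else 0) ≤ (4^(n-k) : ℕ) * C := by
    intro k C i
    calc (∑ j : Idx n, if agree n k (i, j) then C else 0)
        = ∑ j ∈ Finset.univ.filter (fun j : Idx n => agree n k (i, j)), C :=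
          (Finset.sum_filter _ _).symm
      _ = (Finset.univ.filter (fun j : Idx n => agree n k (i, j))).card • C :=
          Finset.sum_const _
      _ ≤ (4^(n-k) : ℕ) * C := by
          rw [nsmul_eq_mul]
          apply mul_le_mul_left
          have heq : Finset.univ.filter (fun j : Idx n => agree n k (i, j)) =
              Finset.univ.filter (fun j : Idx n =>
                (∀ l : Fin n, (l:ℕ) < k → j.1 l = i.1 l) ∧
                (∀ l : Fin n, (l:ℕ) < k → j.2 l = i.2 l)) := by
            apply Finset.filter_congr
            intro j _
            simp [agree]
          rw [heq]
          exact_mod_cast Nat.cast_le.mpr (count_pairs n k i)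
  -- per-k sum bound
  have hksum : ∀ k, k ≤ n →
      (∑ p : Idx n × Idx n, if agree n k p then ENNReal.ofReal (192 * Dn n * (4:ℝ)^k) else 0)
        ≤ (4:ℝ≥0∞)^n * ENNReal.ofReal 192 := by
    intro k hk
    rw [Fintype.sum_prod_type]
    have key : ((4^(n-k):ℕ) : ℝ≥0∞) * ENNReal.ofReal (192 * Dn n * (4:ℝ)^k)
        = ENNReal.ofReal 192 := by
      rw [show ((4^(n-k):ℕ):ℝ≥0∞) = ENNReal.ofReal ((4:ℝ)^(n-k)) by
        rw [← ENNReal.ofReal_natCast]; congr 1; push_cast; ring]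
      rw [← ENNReal.ofReal_mul (by positivity)]
      congr 1
      rw [Dn_eq]
      have h4 : (4:ℝ)^(n-k) * (4:ℝ)^k = 4^n := by rw [← pow_add]; congr 1; omega
      have h5 : (1/4:ℝ)^n * (4:ℝ)^n = 1 := by rw [← mul_pow]; norm_num
      calc (4:ℝ)^(n-k) * (192 * (1/4)^n * 4^k)
          = 192 * ((1/4:ℝ)^n * ((4:ℝ)^(n-k) * (4:ℝ)^k)) := by ring
        _ = 192 * ((1/4:ℝ)^n * (4:ℝ)^n) := by rw [h4]
        _ = 192 := by rw [h5]; norm_num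
    calc (∑ i : Idx n, ∑ j : Idx n,
            if agree n k (i, j) then ENNReal.ofReal (192 * Dn n * (4:ℝ)^k) else 0)
        ≤ ∑ _i : Idx n, ((4^(n-k):ℕ) : ℝ≥0∞) * ENNReal.ofReal (192 * Dn n * (4:ℝ)^k) :=
          Finset.sum_le_sum (fun i _ => inner_gen k _ i)
      _ = (Finset.univ : Finset (Idx n)).card •
            (((4^(n-k):ℕ) : ℝ≥0∞) * ENNReal.ofReal (192 * Dn n * (4:ℝ)^k)) :=
          Finset.sum_const _
      _ = (4:ℝ≥0∞)^n * ENNReal.ofReal 192 := by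
          rw [key, hcard, nsmul_eq_mul, hc4]
  -- the (n-2) term
  have htail : (∑ p : Idx n × Idx n, if agree n (n-2) p then (1:ℝ≥0∞) else 0)
      ≤ (4:ℝ≥0∞)^n * ENNReal.ofReal 16 := by
    rw [Fintype.sum_prod_type]
    have h16 : ((4^(n-(n-2)):ℕ) : ℝ≥0∞) * 1 ≤ ENNReal.ofReal 16 := by
      rw [mul_one]
      have : (4:ℕ)^(n-(n-2)) ≤ 16 := by
        have : n - (n-2) ≤ 2 := by omega
        calc (4:ℕ)^(n-(n-2)) ≤ 4^2 := Nat.pow_le_pow_right (by norm_num) this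
          _ = 16 := by norm_num
      calc ((4^(n-(n-2)):ℕ) : ℝ≥0∞) ≤ ((16:ℕ) : ℝ≥0∞) := Nat.cast_le.mpr this
        _ = ENNReal.ofReal 16 := by rw [← ENNReal.ofReal_natCast]; norm_num
    calc (∑ i : Idx n, ∑ j : Idx n, if agree n (n-2) (i, j) then (1:ℝ≥0∞) else 0)
        ≤ ∑ _i : Idx n, ((4^(n-(n-2)):ℕ) : ℝ≥0∞) * 1 :=
          Finset.sum_le_sum (fun i _ => inner_gen (n-2) 1 i)
      _ ≤ ∑ _i : Idx n, ENNReal.ofReal 16 := Finset.sum_le_sum (fun _ _ => h16)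
      _ = (4:ℝ≥0∞)^n * ENNReal.ofReal 16 := by
          rw [Finset.sum_const, hcard, nsmul_eq_mul, hc4]
  -- assemble
  calc ∑ p : Idx n × Idx n, volume (Bad n p)
      ≤ ∑ p : Idx n × Idx n,
          ((∑ k ∈ Finset.range (n+1),
            (if agree n k p then ENNReal.ofReal (192 * Dn n * (4:ℝ)^k) else 0))
          + (if agree n (n-2) p then (1:ℝ≥0∞) else 0)) :=
        Finset.sum_le_sum (fun p _ => perpair n p)
    _ = (∑ k ∈ Finset.range (n+1), ∑ p : Idx n × Idx n,
          (if agree n k p then ENNReal.ofReal (192 * Dn n * (4:ℝ)^k) else 0))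
        + (∑ p : Idx n × Idx n, if agree n (n-2) p then (1:ℝ≥0∞) else 0) := by
        rw [Finset.sum_add_distrib]
        congr 1
        rw [Finset.sum_comm]
    _ ≤ (∑ _k ∈ Finset.range (n+1), (4:ℝ≥0∞)^n * ENNReal.ofReal 192)
        + (4:ℝ≥0∞)^n * ENNReal.ofReal 16 := by
        apply add_le_add _ htail
        apply Finset.sum_le_sum
        intro k hk
        have := Finset.mem_range.mp hk
        exact hksum k (by omega)
    _ = (4:ℝ≥0∞)^n * ((n+1) * ENNReal.ofReal 192 + ENNReal.ofReal 16) := by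
        rw [Finset.sum_const, Finset.card_range, nsmul_eq_mul]
        push_cast
        ring
    _ ≤ (4:ℝ≥0∞)^n * ENNReal.ofReal (400 * n) := by
        apply mul_le_mul_right
        have hcast : ((n:ℝ≥0∞)+1) = ENNReal.ofReal ((n:ℝ)+1) := by
          rw [ENNReal.ofReal_add (by positivity) (by norm_num), ENNReal.ofReal_natCast,
            ENNReal.ofReal_one]
        rw [hcast, ← ENNReal.ofReal_mul (by positivity), ← ENNReal.ofReal_add (by positivity) (by norm_num)]
        apply ENNReal.ofReal_le_ofReal
        have : (1:ℝ) ≤ (n:ℝ) := by exact_mod_cast hn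
        nlinarith





-- continuity facts
lemma cont_corner {n : ℕ} (i : Idx n) : Continuous fun θ => corner θ i := by
  have : (fun θ => corner θ i) =
      fun θ => cantorX i.1 * Real.cos θ + cantorX i.2 * Real.sin θ :=
    funext fun θ => corner_eq θ i
  rw [this]
  exact (continuous_const.mul Real.continuous_cos).add (continuous_const.mul Real.continuous_sin)

lemma cont_lco : Continuous lco := by
  have : lco = fun θ => min (Real.cos θ) 0 + min (Real.sin θ) 0 := funext lco_eq
  rw [this]
  exact (Real.continuous_cos.min continuous_const).add (Real.continuous_sin.min continuous_const)

lemma cont_wco : Continuous wco := by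
  have : wco = fun θ => |Real.cos θ| + |Real.sin θ| := funext wco_eq
  rw [this]
  exact (Real.continuous_cos.abs).add (Real.continuous_sin.abs)

lemma cont_endA {n : ℕ} (i : Idx n) : Continuous fun θ => endA θ i := by
  have : (fun θ => endA θ i) = fun θ => corner θ i + Dn n * lco θ :=
    funext fun θ => endA_eq θ i
  rw [this]
  exact (cont_corner i).add (continuous_const.mul cont_lco)

-- indicator form of the counting function
lemma Ncnt_ite_eq (n : ℕ) (p : Idx n × Idx n) :
    (fun θ => if |corner θ p.1 - corner θ p.2| ≤ 2 * Dn n then (1:ℝ≥0∞) else 0) =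
      Set.indicator {θ : ℝ | |corner θ p.1 - corner θ p.2| ≤ 2 * Dn n} (fun _ => 1) := by
  funext θ
  rw [Set.indicator_apply]
  simp [Set.mem_setOf_eq]

lemma meas_cond (n : ℕ) (p : Idx n × Idx n) :
    MeasurableSet {θ : ℝ | |corner θ p.1 - corner θ p.2| ≤ 2 * Dn n} := by
  apply (isClosed_le _ continuous_const).measurableSet
  exact (((cont_corner p.1).sub (cont_corner p.2)).abs)

lemma meas_Ncnt (n : ℕ) : Measurable (Ncnt n) := by
  unfold Ncnt
  apply Finset.measurable_sum
  intro p _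
  rw [Ncnt_ite_eq n p]
  exact measurable_one.indicator (meas_cond n p)

lemma meas_angI : MeasurableSet angI := by rw [angI_eq]; exact measurableSet_Ioc

lemma lint_Ncnt (n : ℕ) :
    ∫⁻ θ in angI, Ncnt n θ = ∑ p : Idx n × Idx n, volume (Bad n p) := by
  unfold Ncnt
  rw [lintegral_finset_sum]
  · apply Finset.sum_congr rfl
    intro p _
    rw [Ncnt_ite_eq n p]
    rw [lintegral_indicator (meas_cond n p), setLIntegral_one]
    rw [Measure.restrict_apply (meas_cond n p)]
    congr 1
    ext θ
    simp only [Set.mem_inter_iff, Set.mem_setOf_eq, Bad]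
    tauto
  · intro p _
    rw [Ncnt_ite_eq n p]
    exact measurable_one.indicator (meas_cond n p)

-- bound on corner and on the image measure
lemma corner_abs_le {n : ℕ} (θ : ℝ) (i : Idx n) : |corner θ i| ≤ 2 := by
  rw [corner_eq]
  have h1 := cantorX_nonneg i.1
  have h2 := cantorX_le_one i.1
  have h3 := cantorX_nonneg i.2
  have h4 := cantorX_le_one i.2
  have h5 := Real.abs_cos_le_one θ
  have h6 := Real.abs_sin_le_one θ
  calc |cantorX i.1 * Real.cos θ + cantorX i.2 * Real.sin θ|
      ≤ |cantorX i.1 * Real.cos θ| + |cantorX i.2 * Real.sin θ| := abs_add_le _ _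
    _ = |cantorX i.1| * |Real.cos θ| + |cantorX i.2| * |Real.sin θ| := by
        rw [abs_mul, abs_mul]
    _ ≤ 1 * 1 + 1 * 1 := by
        apply add_le_add <;>
          apply mul_le_mul _ (by assumption) (abs_nonneg _) (by norm_num) <;>
          rw [abs_of_nonneg (by assumption)] <;> assumption
    _ = 2 := by norm_num
 
lemma vol_image_le (n : ℕ) (θ : ℝ) :
    volume (projAngle θ '' cantorK n) ≤ ENNReal.ofReal 8 := by
  rw [image_cantorK]
  have hsub : (⋃ i : Idx n, Icc (endA θ i) (endA θ i + Dn n * wco θ)) ⊆ Icc (-4:ℝ) 4 := by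
    apply iUnion_subset
    intro i
    apply Icc_subset_Icc
    · have h1 := corner_abs_le θ i
      have h2 := (abs_le.mp h1).1
      have h3 := lco_bounds θ
      have h4 := Dn_pos n
      have h5 := Dn_le_one n
      rw [endA_eq]
      nlinarith [h3.1, h3.2]
    · have h1 := corner_abs_le θ i
      have h2 := (abs_le.mp h1).2
      have h3 := lco_bounds θ
      have h4 := Dn_pos n
      have h5 := Dn_le_one n
      have h6 := wco_le_two θ
      have h7 : 0 ≤ wco θ := by rw [wco_eq]; positivity
      rw [endA_eq]
      nlinarith [h3.1, h3.2]
  calc volume _ ≤ volume (Icc (-4:ℝ) 4) := measure_mono hsub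
    _ = ENNReal.ofReal 8 := by rw [Real.volume_Icc]; norm_num

lemma meas_vol (n : ℕ) : Measurable (fun θ => volume (projAngle θ '' cantorK n)) := by
  classical
  set S : Set (ℝ × ℝ) :=
    {q : ℝ × ℝ | ∃ i : Idx n, endA q.1 i ≤ q.2 ∧ q.2 ≤ endA q.1 i + Dn n * wco q.1} with hS
  have hSm : MeasurableSet S := by
    have : S = ⋃ i : Idx n,
        ({q : ℝ × ℝ | endA q.1 i ≤ q.2} ∩ {q : ℝ × ℝ | q.2 ≤ endA q.1 i + Dn n * wco q.1}) := by
      ext q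
      simp [hS, Set.mem_iUnion, Set.mem_inter_iff, Set.mem_setOf_eq]
    rw [this]
    apply MeasurableSet.iUnion
    intro i
    apply MeasurableSet.inter
    · exact (isClosed_le ((cont_endA i).comp continuous_fst) continuous_snd).measurableSet
    · apply (isClosed_le continuous_snd _).measurableSet
      exact (((cont_endA i).comp continuous_fst).add
        (continuous_const.mul (cont_wco.comp continuous_fst)))
  have heq : (fun θ => volume (projAngle θ '' cantorK n)) =
      fun θ => volume (Prod.mk θ ⁻¹' S) := by
    funext θ
    congr 1
    rw [image_cantorK]
    ext z
    simp [hS, Set.mem_iUnion, Set.mem_Icc, Set.mem_preimage]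
  rw [heq]
  exact measurable_measure_prodMk_left hSm

-- the projection-measure function
def h (n : ℕ) (θ : ℝ) : ℝ := (volume (projAngle θ '' cantorK n)).toReal

lemma h_nonneg (n : ℕ) (θ : ℝ) : 0 ≤ h n θ := ENNReal.toReal_nonneg

lemma h_le (n : ℕ) (θ : ℝ) : h n θ ≤ 8 := by
  unfold h
  calc (volume (projAngle θ '' cantorK n)).toReal
      ≤ (ENNReal.ofReal 8).toReal :=
        ENNReal.toReal_mono (by simp) (vol_image_le n θ)
    _ = 8 := by rw [ENNReal.toReal_ofReal]; norm_num

lemma meas_h (n : ℕ) : Measurable (h n) := (meas_vol n).ennreal_toReal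

lemma integrableOn_h (n : ℕ) (s : Set ℝ) (hs : MeasurableSet s) (hfin : volume s ≠ ∞) :
    IntegrableOn (h n) s volume := by
  haveI : IsFiniteMeasure (volume.restrict s) :=
    ⟨by rw [Measure.restrict_apply_univ]; exact lt_top_iff_ne_top.mpr hfin⟩
  refine ⟨(meas_h n).aestronglyMeasurable, ?_⟩
  apply HasFiniteIntegral.of_bounded (C := 8)
  apply ae_of_all
  intro θ
  rw [Real.norm_eq_abs, abs_of_nonneg (h_nonneg n θ)]
  exact h_le n θ

lemma intInt_h (n : ℕ) (a b : ℝ) : IntervalIntegrable (h n) volume a b := by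
  constructor <;>
    exact integrableOn_h n _ measurableSet_Ioc (by rw [Real.volume_Ioc]; simp)

theorem main (n : ℕ) (hn : 1 ≤ n) :
    ((Real.arctan 2 - π/4)^2 / (3200 * π)) / n ≤ favard (cantorK n) := by
  have hπ := Real.pi_pos
  set ℓ : ℝ := Real.arctan 2 - π/4 with hℓdef
  have hℓ : 0 < ℓ := by simp only [hℓdef, sub_pos]; exact pi4_lt_arctan2
  have hn' : (1:ℝ) ≤ (n:ℝ) := by exact_mod_cast hn
  have hnpos : (0:ℝ) < n := by linarith
  set ε : ℝ≥0∞ := ENNReal.ofReal (800 * 4^n * n / ℓ) with hεdef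
  have hεval : (0:ℝ) < 800 * 4^n * n / ℓ := by positivity
  have hε0 : ε ≠ 0 := by
    simp only [hεdef, ne_eq, ENNReal.ofReal_eq_zero, not_le]
    exact hεval
  have hεtop : ε ≠ ∞ := ENNReal.ofReal_ne_top
  -- Markov inequality
  have hmar := meas_ge_le_lintegral_div (μ := volume.restrict angI)
    (meas_Ncnt n).aemeasurable hε0 hεtop
  have hE : ∫⁻ θ, Ncnt n θ ∂(volume.restrict angI) ≤ (4:ℝ≥0∞)^n * ENNReal.ofReal (400 * n) := by
    rw [show ∫⁻ θ, Ncnt n θ ∂(volume.restrict angI) = ∫⁻ θ in angI, Ncnt n θ from rfl]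
    rw [lint_Ncnt n]
    exact sum_bad n hn
  have hbad_meas : MeasurableSet {θ : ℝ | ε ≤ Ncnt n θ} :=
    measurableSet_le measurable_const (meas_Ncnt n)
  have hbadle : volume ({θ : ℝ | ε ≤ Ncnt n θ} ∩ angI) ≤ ENNReal.ofReal (ℓ/2) := by
    rw [← Measure.restrict_apply hbad_meas]
    refine le_trans hmar ?_
    refine le_trans (ENNReal.div_le_div_right hE ε) ?_
    rw [ENNReal.div_le_iff_le_mul (Or.inl hε0) (Or.inl hεtop)]
    have h4 : (4:ℝ≥0∞)^n = ENNReal.ofReal ((4:ℝ)^n) := by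
      rw [ENNReal.ofReal_pow (by norm_num)]
      norm_num
    rw [h4, ← ENNReal.ofReal_mul (by positivity), hεdef,
      ← ENNReal.ofReal_mul (by positivity)]
    apply ENNReal.ofReal_le_ofReal
    rw [show ℓ/2 * (800 * 4^n * n / ℓ) = 400 * 4^n * n * (ℓ/ℓ) by ring,
      div_self (ne_of_gt hℓ)]
    ring_nf
    apply le_of_eq
    ring
  -- good set
  set G : Set ℝ := {θ : ℝ | Ncnt n θ < ε} ∩ angI with hGdef
  have hGmeas : MeasurableSet G :=
    (measurableSet_lt (meas_Ncnt n) measurable_const).inter meas_angI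
  have hvol_angI : volume angI = ENNReal.ofReal ℓ := by
    rw [angI_eq, Real.volume_Ioc]
  have hGlarge : ENNReal.ofReal (ℓ/2) ≤ volume G := by
    have hcover : angI ⊆ G ∪ ({θ : ℝ | ε ≤ Ncnt n θ} ∩ angI) := by
      intro θ hθ
      rcases lt_or_ge (Ncnt n θ) ε with hc | hc
      · exact Or.inl ⟨hc, hθ⟩
      · exact Or.inr ⟨hc, hθ⟩
    have h1 : ENNReal.ofReal ℓ ≤ volume G + ENNReal.ofReal (ℓ/2) := by
      calc ENNReal.ofReal ℓ = volume angI := hvol_angI.symm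
        _ ≤ volume (G ∪ ({θ : ℝ | ε ≤ Ncnt n θ} ∩ angI)) := measure_mono hcover
        _ ≤ volume G + volume ({θ : ℝ | ε ≤ Ncnt n θ} ∩ angI) := measure_union_le _ _
        _ ≤ volume G + ENNReal.ofReal (ℓ/2) := add_le_add_right hbadle _
    have h2 : ENNReal.ofReal ℓ - ENNReal.ofReal (ℓ/2) ≤ volume G :=
      tsub_le_iff_right.mpr h1
    calc ENNReal.ofReal (ℓ/2) = ENNReal.ofReal ℓ - ENNReal.ofReal (ℓ/2) := by
          rw [← ENNReal.ofReal_sub _ (by positivity)]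
          congr 1
          ring
      _ ≤ volume G := h2
  -- pointwise lower bound on G
  set lb : ℝ := ℓ / (1600 * n) with hlbdef
  have hlb0 : 0 < lb := by positivity
  have hpoint : ∀ θ ∈ G, lb ≤ h n θ := by
    rintro θ ⟨hθlt, hθI⟩
    have hsA := stepA n θ
    have h1 : (4:ℝ)^n * Dn n = 1 := by
      rw [Dn_eq, ← mul_pow]; norm_num
    rw [h1, ENNReal.ofReal_one, one_pow] at hsA
    have hNle : Ncnt n θ ≤ ε := le_of_lt hθlt
    set β : ℝ≥0∞ := ENNReal.ofReal (1600 * n / ℓ) with hβdef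
    have hβval : (0:ℝ) < 1600 * n / ℓ := by positivity
    have hβ0 : β ≠ 0 := by
      simp only [hβdef, ne_eq, ENNReal.ofReal_eq_zero, not_le]; exact hβval
    have hβtop : β ≠ ∞ := ENNReal.ofReal_ne_top
    have hβeq : ENNReal.ofReal (2 * Dn n) * ε = β := by
      rw [hεdef, hβdef, ← ENNReal.ofReal_mul (by have := Dn_pos n; positivity)]
      congr 1
      have hD4 : Dn n * (4:ℝ)^n = 1 := by rw [Dn_eq, ← mul_pow]; norm_num
      field_simp
      nlinarith [hD4]
    have hkey : 1 ≤ volume (projAngle θ '' cantorK n) * β := by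
      calc (1:ℝ≥0∞) ≤ volume (projAngle θ '' cantorK n) * (ENNReal.ofReal (2 * Dn n) * Ncnt n θ) := hsA
        _ ≤ volume (projAngle θ '' cantorK n) * (ENNReal.ofReal (2 * Dn n) * ε) := by
            apply mul_le_mul_right
            exact mul_le_mul_right hNle _
        _ = volume (projAngle θ '' cantorK n) * β := by rw [hβeq]
    have hvol_ge : ENNReal.ofReal lb ≤ volume (projAngle θ '' cantorK n) := by
      have hdiv : (1:ℝ≥0∞)/β ≤ volume (projAngle θ '' cantorK n) := by
        rw [ENNReal.div_le_iff_le_mul (Or.inl hβ0) (Or.inl hβtop)]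
        exact hkey
      have heq2 : (1:ℝ≥0∞)/β = ENNReal.ofReal lb := by
        rw [one_div, hβdef, ← ENNReal.ofReal_inv_of_pos hβval]
        congr 1
        rw [hlbdef]
        field_simp
      rw [← heq2]
      exact hdiv
    unfold h
    calc lb = (ENNReal.ofReal lb).toReal := by rw [ENNReal.toReal_ofReal hlb0.le]
      _ ≤ (volume (projAngle θ '' cantorK n)).toReal := by
          apply ENNReal.toReal_mono _ hvol_ge
          exact ne_top_of_le_ne_top (by simp) (vol_image_le n θ)
  -- volume of G is finite and its toReal is at least ℓ/2
  have hGfin : volume G ≠ ∞ := by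
    apply ne_top_of_le_ne_top _ (measure_mono inter_subset_right)
    rw [hvol_angI]; simp
  have hGtoReal : ℓ/2 ≤ (volume G).toReal := by
    calc ℓ/2 = (ENNReal.ofReal (ℓ/2)).toReal := by rw [ENNReal.toReal_ofReal (by positivity)]
      _ ≤ (volume G).toReal := ENNReal.toReal_mono hGfin hGlarge
  -- set integral bounds
  have hangI_fin : volume angI ≠ ∞ := by rw [hvol_angI]; simp
  have hIntangI : IntegrableOn (h n) angI volume := integrableOn_h n angI meas_angI hangI_fin
  have hIntG : IntegrableOn (h n) G volume := hIntangI.mono_set inter_subset_right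
  have hsetG : lb * (volume G).toReal ≤ ∫ θ in G, h n θ :=
    setIntegral_ge_of_const_le_real hGmeas hGfin hpoint hIntG
  have hGsub : ∫ θ in G, h n θ ≤ ∫ θ in angI, h n θ := by
    apply setIntegral_mono_set hIntangI
    · exact ae_of_all _ (h_nonneg n)
    · exact HasSubset.Subset.eventuallyLE inter_subset_right
  -- interval integral over the angle interval
  have hmid : lb * (ℓ/2) ≤ ∫ θ in (π/4)..(Real.arctan 2), h n θ := by
    rw [intervalIntegral.integral_of_le pi4_lt_arctan2.le]
    have : ∫ θ in Ioc (π/4) (Real.arctan 2), h n θ = ∫ θ in angI, h n θ := by rw [← angI_eq]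
    rw [this]
    calc lb * (ℓ/2) ≤ lb * (volume G).toReal := by
          apply mul_le_mul_of_nonneg_left hGtoReal hlb0.le
      _ ≤ ∫ θ in G, h n θ := hsetG
      _ ≤ ∫ θ in angI, h n θ := hGsub
  -- assemble the full integral
  have ha2π : Real.arctan 2 ≤ π := by linarith [arctan2_lt_pi2]
  have hsplit1 : ∫ θ in (0:ℝ)..(Real.arctan 2), h n θ =
      (∫ θ in (0:ℝ)..(π/4), h n θ) + ∫ θ in (π/4)..(Real.arctan 2), h n θ :=
    (intervalIntegral.integral_add_adjacent_intervals (intInt_h n _ _) (intInt_h n _ _)).symm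
  have hsplit2 : ∫ θ in (0:ℝ)..π, h n θ =
      (∫ θ in (0:ℝ)..(Real.arctan 2), h n θ) + ∫ θ in (Real.arctan 2)..π, h n θ :=
    (intervalIntegral.integral_add_adjacent_intervals (intInt_h n _ _) (intInt_h n _ _)).symm
  have hp1 : 0 ≤ ∫ θ in (0:ℝ)..(π/4), h n θ :=
    intervalIntegral.integral_nonneg (by positivity) (fun θ _ => h_nonneg n θ)
  have hp3 : 0 ≤ ∫ θ in (Real.arctan 2)..π, h n θ :=
    intervalIntegral.integral_nonneg ha2π (fun θ _ => h_nonneg n θ)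
  have htotal : lb * (ℓ/2) ≤ ∫ θ in (0:ℝ)..π, h n θ := by
    rw [hsplit2, hsplit1]
    linarith
  -- conclude
  have hfav : favard (cantorK n) = (1/π) * ∫ θ in (0:ℝ)..π, h n θ := rfl
  rw [hfav]
  have hfinal : (ℓ^2 / (3200 * π)) / n = (1/π) * (lb * (ℓ/2)) := by
    rw [hlbdef]
    field_simp
    ring
  rw [hfinal]
  apply mul_le_mul_of_nonneg_left htotal (by positivity)


end
end FavProof

/-- There exists `c > 0` such that for all `n ≥ 1`, `Fav(K_n) ≥ c / n`. -/
theorem favard_cantorK_ge_inv : ∃ c : ℝ, 0 < c ∧ ∀ n : ℕ, 1 ≤ n →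
    favard (cantorK n) ≥ c / n := by
  refine ⟨(Real.arctan 2 - π/4)^2 / (3200 * π), ?_, ?_⟩
  · have h1 : 0 < Real.arctan 2 - π/4 := sub_pos.mpr FavProof.pi4_lt_arctan2
    have h2 := Real.pi_pos
    positivity
  · intro n hn
    exact FavProof.main n hn
end

section
/- There exists a constant c > 0 such that for every natural number n ≥ 1, the Lebesgue measure of the set of angles θ ∈ [0,π) for which |proj_θ(K_n)| ≥ c/n is at least π/2; in other words, the median over θ ∈ [0,π) of the projection length |proj_θ(K_n)| is at least c/n. -/
open MeasureTheory Real Set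

noncomputable section Aux

lemma fourpow_eq (m : ℕ) : (4:ℝ) ^ (-((m : ℕ) + 1) : ℤ) = (1/4:ℝ)^(m+1) := by
  rw [show (-((m : ℕ) + 1) : ℤ) = -((m+1 : ℕ) : ℤ) by push_cast; ring, zpow_neg, zpow_natCast,
    ← inv_pow]
  norm_num

lemma tail_bound {n : ℕ} (k : Fin n) :
    ∑ j ∈ Finset.Ioi k, (1/4:ℝ)^((j:ℕ)+1) ≤ (1/3) * (1/4:ℝ)^((k:ℕ)+1) := by
  have h1 : ∑ j ∈ Finset.Ioi k, (1/4:ℝ)^((j:ℕ)+1)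
      = ∑ m ∈ (Finset.Ioi k).map Fin.valEmbedding, (1/4:ℝ)^(m+1) := by
    rw [Finset.sum_map]; rfl
  rw [h1, Fin.map_valEmbedding_Ioi]
  have hsub : Finset.Ioc (k:ℕ) (n-1) ⊆ Finset.Ico ((k:ℕ)+1) n := by
    intro m hm
    simp only [Finset.mem_Ioc] at hm
    simp only [Finset.mem_Ico]
    have hn : 0 < n := Nat.lt_of_le_of_lt (Nat.zero_le _) k.2
    exact ⟨hm.1, lt_of_le_of_lt hm.2 (Nat.pred_lt hn.ne')⟩
  have h2 : ∑ m ∈ Finset.Ioc (k:ℕ) (n-1), (1/4:ℝ)^(m+1)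
      ≤ ∑ m ∈ Finset.Ico ((k:ℕ)+1) n, (1/4:ℝ)^(m+1) :=
    Finset.sum_le_sum_of_subset_of_nonneg hsub (fun _ _ _ => by positivity)
  rw [← Finset.Ico_add_one_left_eq_Ioo]
  rw [Finset.sum_Ico_eq_sum_range]
  have h3 : ∀ i ∈ Finset.range (n - ((k:ℕ)+1)), (1/4:ℝ)^((k:ℕ)+1+i+1)
      = (1/4:ℝ)^((k:ℕ)+2) * (1/4:ℝ)^i := fun i _ => by ring
  rw [Finset.sum_congr rfl h3, ← Finset.mul_sum]
  have h4 : ∑ i ∈ Finset.range (n - ((k:ℕ)+1)), (1/4:ℝ)^i ≤ 4/3 := by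
    rw [geom_sum_eq (by norm_num : (1/4:ℝ) ≠ 1)]
    have h5 : (0:ℝ) ≤ (1/4:ℝ)^(n - ((k:ℕ)+1)) := by positivity
    have h6 : ((1/4:ℝ)^(n - ((k:ℕ)+1)) - 1) / (1/4 - 1)
        = (1 - (1/4:ℝ)^(n - ((k:ℕ)+1))) * (4/3) := by ring
    rw [h6]; nlinarith
  calc (1/4:ℝ)^((k:ℕ)+2) * ∑ i ∈ Finset.range (n - ((k:ℕ)+1)), (1/4:ℝ)^i
      ≤ (1/4:ℝ)^((k:ℕ)+2) * (4/3) := mul_le_mul_of_nonneg_left h4 (by positivity)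
    _ = (1/3) * (1/4:ℝ)^((k:ℕ)+1) := by ring

lemma dig_sub {x y : Bool} (h : x ≠ y) : |dig x - dig y| = 3 := by
  cases x <;> cases y <;> simp_all [dig]

lemma dig_sub_le (x y : Bool) : |dig x - dig y| ≤ 3 := by
  cases x <;> cases y <;> norm_num [dig]

lemma cantorX_sep {n : ℕ} {a a' : Fin n → Bool} (k : Fin n)
    (hlt : ∀ j, j < k → a j = a' j) (hk : a k ≠ a' k) :
    2 * (1/4:ℝ)^((k:ℕ)+1) ≤ |cantorX a - cantorX a'| := by
  set h : Fin n → ℝ := fun j => (dig (a j) - dig (a' j)) * (1/4:ℝ)^((j:ℕ)+1) with hh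
  have hsum : cantorX a - cantorX a' = ∑ j : Fin n, h j := by
    rw [cantorX, cantorX, ← Finset.sum_sub_distrib]
    refine Finset.sum_congr rfl fun j _ => ?_
    rw [hh]; simp only [fourpow_eq]; ring
  have hsplit : ∑ j : Fin n, h j = h k + ∑ j ∈ Finset.univ.erase k, h j :=
    (Finset.add_sum_erase _ _ (Finset.mem_univ k)).symm
  have hkval : |h k| = 3 * (1/4:ℝ)^((k:ℕ)+1) := by
    rw [hh]
    simp only [abs_mul, abs_of_nonneg (by positivity : (0:ℝ) ≤ (1/4:ℝ)^((k:ℕ)+1))]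
    rw [dig_sub hk]
  have hrest : |∑ j ∈ Finset.univ.erase k, h j| ≤ (1/4:ℝ)^((k:ℕ)+1) := by
    have hfil : (Finset.univ.erase k).filter (fun j => k < j) = Finset.Ioi k := by
      ext j
      simp only [Finset.mem_filter, Finset.mem_erase, Finset.mem_univ, Finset.mem_Ioi]
      exact ⟨fun hj => hj.2, fun hj => ⟨⟨ne_of_gt hj, trivial⟩, hj⟩⟩
    calc |∑ j ∈ Finset.univ.erase k, h j| ≤ ∑ j ∈ Finset.univ.erase k, |h j| :=
          Finset.abs_sum_le_sum_abs _ _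
      _ ≤ ∑ j ∈ Finset.univ.erase k, (if k < j then 3 * (1/4:ℝ)^((j:ℕ)+1) else 0) := by
          refine Finset.sum_le_sum fun j hj => ?_
          rcases lt_trichotomy j k with hlt' | heq | hgt
          · rw [if_neg (not_lt.2 hlt'.le), hh]
            simp [hlt _ hlt']
          · exact absurd heq (Finset.ne_of_mem_erase hj)
          · rw [if_pos hgt, hh, abs_mul,
              abs_of_nonneg (by positivity : (0:ℝ) ≤ (1/4:ℝ)^((j:ℕ)+1))]
            exact mul_le_mul_of_nonneg_right (dig_sub_le _ _) (by positivity)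
      _ = ∑ j ∈ Finset.Ioi k, 3 * (1/4:ℝ)^((j:ℕ)+1) := by
          rw [← Finset.sum_filter, hfil]
      _ = 3 * ∑ j ∈ Finset.Ioi k, (1/4:ℝ)^((j:ℕ)+1) := by rw [Finset.mul_sum]
      _ ≤ 3 * ((1/3) * (1/4:ℝ)^((k:ℕ)+1)) :=
          mul_le_mul_of_nonneg_left (tail_bound k) (by norm_num)
      _ = (1/4:ℝ)^((k:ℕ)+1) := by ring
  have habs : |h k| - |∑ j ∈ Finset.univ.erase k, h j| ≤ |cantorX a - cantorX a'| := by
    rw [hsum, hsplit]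
    have := abs_add_le (h k + ∑ j ∈ Finset.univ.erase k, h j) (-(∑ j ∈ Finset.univ.erase k, h j))
    simp only [add_neg_cancel_right, abs_neg] at this
    linarith
  linarith

end Aux

noncomputable section Main

abbrev Wrd (n : ℕ) := Fin n → Bool × Bool

def xw {n : ℕ} (u : Wrd n) : ℝ := cantorX fun j => (u j).1
def yw {n : ℕ} (u : Wrd n) : ℝ := cantorX fun j => (u j).2
def zf {n : ℕ} (θ : ℝ) (u : Wrd n) : ℝ := xw u * Real.cos θ + yw u * Real.sin θ
def dl (n : ℕ) : ℝ := (1/4:ℝ)^n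

lemma dl_pos (n : ℕ) : 0 < dl n := by rw [dl]; positivity

lemma dl_eq (n : ℕ) : (4:ℝ)^(-(n:ℤ)) = dl n := by
  rw [dl, zpow_neg, zpow_natCast, ← inv_pow]; norm_num

lemma cantorC_mem {n : ℕ} (a : Fin n → Bool) {t : ℝ} (ht0 : 0 ≤ t) (ht1 : t ≤ dl n) :
    cantorX a + t ∈ cantorC n := by
  rw [cantorC]
  exact mem_iUnion.2 ⟨a, by constructor <;> [linarith; (rw [dl_eq]; linarith)]⟩

lemma cantorC_mem0 {n : ℕ} (a : Fin n → Bool) : cantorX a ∈ cantorC n := by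
  simpa using cantorC_mem a le_rfl (dl_pos n).le

/-- For each `θ` there is a coefficient `e` (either `cos θ` or `sin θ`) with `|e| ≥ 1/2`
such that each generation square projects onto the interval from `zf θ u` of length `δ e`. -/
lemma edge_subset {n : ℕ} (θ : ℝ) : ∃ e : ℝ, 1/2 ≤ |e| ∧ |e| ≤ 1 ∧
    ∀ u : Wrd n, Set.uIcc (zf θ u) (zf θ u + dl n * e) ⊆ projAngle θ '' cantorK n := by
  have hpyth := Real.sin_sq_add_cos_sq θ
  have key : ∀ (z c : ℝ), c ≠ 0 → 0 ≤ dl n → ∀ y ∈ Set.uIcc z (z + dl n * c),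
      ∃ t, 0 ≤ t ∧ t ≤ dl n ∧ y = z + t * c := by
    intro z c hc hd y hy
    refine ⟨(y - z)/c, ?_, ?_, by field_simp; ring⟩
    · rcases lt_or_gt_of_ne hc with hneg | hpos
      · rw [Set.uIcc_of_ge (by nlinarith : z + dl n * c ≤ z)] at hy
        rw [le_div_iff_of_neg hneg]
        simpa using hy.2
      · rw [Set.uIcc_of_le (by nlinarith : z ≤ z + dl n * c)] at hy
        rw [le_div_iff₀ hpos]
        simpa using hy.1
    · rcases lt_or_gt_of_ne hc with hneg | hpos
      · rw [Set.uIcc_of_ge (by nlinarith : z + dl n * c ≤ z)] at hy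
        rw [div_le_iff_of_neg hneg]
        have := hy.1
        nlinarith
      · rw [Set.uIcc_of_le (by nlinarith : z ≤ z + dl n * c)] at hy
        rw [div_le_iff₀ hpos]
        have := hy.2
        nlinarith
  rcases le_total |Real.sin θ| |Real.cos θ| with hcs | hcs
  · refine ⟨Real.cos θ, ?_, Real.abs_cos_le_one θ, fun u y hy => ?_⟩
    · nlinarith [abs_nonneg (Real.cos θ), abs_nonneg (Real.sin θ), sq_abs (Real.cos θ),
        sq_abs (Real.sin θ)]
    · have hc : Real.cos θ ≠ 0 := by
        intro h0
        rw [h0] at hcs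
        simp only [abs_zero] at hcs
        have hs0 : Real.sin θ = 0 := abs_eq_zero.1 (le_antisymm hcs (abs_nonneg _))
        rw [h0, hs0] at hpyth
        norm_num at hpyth
      obtain ⟨t, ht0, ht1, hty⟩ := key _ _ hc (dl_pos n).le y hy
      refine ⟨(cantorX (fun j => (u j).1) + t, cantorX (fun j => (u j).2)), ?_, ?_⟩
      · exact ⟨cantorC_mem _ ht0 ht1, cantorC_mem0 _⟩
      · rw [projAngle, hty, zf, xw, yw]; ring
  · refine ⟨Real.sin θ, ?_, Real.abs_sin_le_one θ, fun u y hy => ?_⟩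
    · nlinarith [abs_nonneg (Real.cos θ), abs_nonneg (Real.sin θ), sq_abs (Real.cos θ),
        sq_abs (Real.sin θ)]
    · have hc : Real.sin θ ≠ 0 := by
        intro h0
        rw [h0] at hcs
        simp only [abs_zero] at hcs
        have hs0 : Real.cos θ = 0 := abs_eq_zero.1 (le_antisymm hcs (abs_nonneg _))
        rw [h0, hs0] at hpyth
        norm_num at hpyth
      obtain ⟨t, ht0, ht1, hty⟩ := key _ _ hc (dl_pos n).le y hy
      refine ⟨(cantorX (fun j => (u j).1), cantorX (fun j => (u j).2) + t), ?_, ?_⟩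
      · exact ⟨cantorC_mem0 _, cantorC_mem _ ht0 ht1⟩
      · rw [projAngle, hty, zf, xw, yw]; ring

end Main

noncomputable section Pointwise
open scoped ENNReal NNReal

open Finset in
lemma pointwise_lb {n : ℕ} (θ : ℝ) (T : ℕ) (hT : 0 < T)
    (hQ : (Finset.univ.filter
        fun p : Wrd n × Wrd n => |zf θ p.1 - zf θ p.2| ≤ 2 * dl n).card ≤ T) :
    ENNReal.ofReal ((4:ℝ)^n * (4:ℝ)^n * dl n / (4 * T)) ≤ volume (projAngle θ '' cantorK n) := by
  classical
  set δ : ℝ := dl n with hδ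
  have hδ0 : 0 < δ := dl_pos n
  set U : Set ℝ := projAngle θ '' cantorK n with hU
  have hC_comp : IsCompact (cantorC n) := isCompact_iUnion (fun a => isCompact_Icc)
  have hK_comp : IsCompact (cantorK n) := hC_comp.prod hC_comp
  have hproj_cont : Continuous (projAngle θ) := by
    show Continuous fun p : ℝ × ℝ => p.1 * Real.cos θ + p.2 * Real.sin θ
    fun_prop
  have hU_comp : IsCompact U := hK_comp.image hproj_cont
  have hU_meas : MeasurableSet U := hU_comp.measurableSet
  obtain ⟨e, he1, he2, hedge⟩ := edge_subset (n := n) θ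
  set f : Wrd n → ℤ := fun u => ⌊zf θ u / (2*δ)⌋ with hf
  set S : Finset ℤ := Finset.image f Finset.univ with hS
  have hex : ∀ k : ℤ, k ∈ S → ∃ u : Wrd n, f u = k := by
    intro k hk
    obtain ⟨u, _, hu⟩ := Finset.mem_image.1 hk
    exact ⟨u, hu⟩
  have : Nonempty (Wrd n) := ⟨fun _ => (false, false)⟩
  choose! rep hrep using hex
  set J : ℤ → Set ℝ := fun k => Set.uIcc (zf θ (rep k)) (zf θ (rep k) + δ * e) with hJ
  have hJU : ∀ k ∈ S, J k ⊆ U := fun k _ => hedge (rep k)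
  have hJIcc : ∀ k, J k ⊆ Icc (zf θ (rep k) - δ) (zf θ (rep k) + δ) := by
    intro k
    apply Set.uIcc_subset_Icc
    · constructor <;> nlinarith
    · have h1 : δ * e ≤ δ := by nlinarith [abs_le.1 he2]
      have h2 : -δ ≤ δ * e := by nlinarith [abs_le.1 he2]
      constructor <;> linarith
  have hJvol : ∀ k, ENNReal.ofReal (δ/2) ≤ volume (J k) := by
    intro k
    rw [hJ, Real.volume_interval]
    apply ENNReal.ofReal_le_ofReal
    rw [add_sub_cancel_left, abs_mul, abs_of_pos hδ0]
    nlinarith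
  -- pointwise multiplicity bound
  have hmult : ∀ x : ℝ, (∑ k ∈ S, (J k).indicator (fun _ => (1:ℝ≥0∞)) x)
      ≤ U.indicator (fun _ => (2:ℝ≥0∞)) x := by
    intro x
    set F : Finset ℤ := S.filter (fun k => x ∈ J k) with hF
    have hsum_eq : (∑ k ∈ S, (J k).indicator (fun _ => (1:ℝ≥0∞)) x) = F.card := by
      rw [hF, ← Finset.sum_filter_add_sum_filter_not S (fun k => x ∈ J k)]
      have h1 : ∀ k ∈ S.filter (fun k => x ∈ J k), (J k).indicator (fun _ => (1:ℝ≥0∞)) x = 1 :=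
        fun k hk => Set.indicator_of_mem (Finset.mem_filter.1 hk).2 _
      have h2 : ∀ k ∈ S.filter (fun k => ¬ x ∈ J k),
          (J k).indicator (fun _ => (1:ℝ≥0∞)) x = 0 :=
        fun k hk => Set.indicator_of_notMem (Finset.mem_filter.1 hk).2 _
      rw [Finset.sum_congr rfl h1, Finset.sum_congr rfl h2, Finset.sum_const, Finset.sum_const]
      simp
    rw [hsum_eq]
    rcases Finset.eq_empty_or_nonempty F with hFe | ⟨k₀, hk₀⟩
    · simp only [hFe, Finset.card_empty, Nat.cast_zero]
      exact zero_le
    · have hxU : x ∈ U := hJU k₀ (Finset.mem_filter.1 hk₀).1 (Finset.mem_filter.1 hk₀).2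
      rw [Set.indicator_of_mem hxU]
      set m' : ℤ := ⌊(x - δ)/(2*δ)⌋ with hm'
      have hFsub : F ⊆ {m', m' + 1} := by
        intro k hk
        obtain ⟨hkS, hkJ⟩ := Finset.mem_filter.1 hk
        have hz : zf θ (rep k) ∈ Icc (x - δ) (x + δ) := by
          have := hJIcc k hkJ
          simp only [Set.mem_Icc] at this ⊢
          constructor <;> linarith [this.1, this.2]
        have hkf : k = ⌊zf θ (rep k) / (2*δ)⌋ := (hrep k hkS).symm
        have h2δ : (0:ℝ) < 2*δ := by linarith
        have hlb : m' ≤ k := by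
          rw [hm', hkf]
          exact Int.floor_le_floor (by apply div_le_div_of_nonneg_right ?_ h2δ.le |>.trans_eq rfl; exact hz.1)
        have hub : k ≤ m' + 1 := by
          rw [hkf, ← Int.floor_add_one]
          apply Int.floor_le_floor
          rw [div_add' _ _ _ h2δ.ne']
          apply div_le_div_of_nonneg_right ?_ h2δ.le |>.trans_eq rfl
          linarith [hz.2]
        simp only [Finset.mem_insert, Finset.mem_singleton]
        omega
      calc (F.card : ℝ≥0∞) ≤ (({m', m' + 1} : Finset ℤ).card : ℝ≥0∞) := by
            exact_mod_cast Nat.cast_le.2 (Finset.card_le_card hFsub)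
        _ ≤ 2 := by
            have := Finset.card_insert_le m' ({m' + 1} : Finset ℤ)
            simp only [Finset.card_singleton] at this
            exact_mod_cast Nat.cast_le.2 this
  -- key inequality A
  have hA : (S.card : ℝ≥0∞) * ENNReal.ofReal (δ/2) ≤ 2 * volume U := by
    have hJmeas : ∀ k, MeasurableSet (J k) := fun k => measurableSet_uIcc
    calc (S.card : ℝ≥0∞) * ENNReal.ofReal (δ/2)
        = ∑ _k ∈ S, ENNReal.ofReal (δ/2) := by rw [Finset.sum_const, nsmul_eq_mul]
      _ ≤ ∑ k ∈ S, volume (J k) := Finset.sum_le_sum fun k _ => hJvol k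
      _ = ∑ k ∈ S, ∫⁻ x, (J k).indicator (fun _ => (1:ℝ≥0∞)) x := by
          refine Finset.sum_congr rfl fun k _ => ?_
          rw [lintegral_indicator_const (hJmeas k), one_mul]
      _ = ∫⁻ x, ∑ k ∈ S, (J k).indicator (fun _ => (1:ℝ≥0∞)) x := by
          rw [lintegral_finset_sum]
          exact fun k _ => (measurable_const.indicator (hJmeas k))
      _ ≤ ∫⁻ x, U.indicator (fun _ => (2:ℝ≥0∞)) x := lintegral_mono hmult
      _ = 2 * volume U := lintegral_indicator_const hU_meas 2
  -- key inequality B : Cauchy-Schwarz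
  have hcard : (Finset.univ : Finset (Wrd n)).card = 4^n := by
    simp [Fintype.card_fun]
  have hB : ((4:ℝ)^n)^2 ≤ (S.card : ℝ) * T := by
    have hfib : (Finset.univ : Finset (Wrd n)).card
        = ∑ k ∈ S, (Finset.univ.filter fun u => f u = k).card :=
      Finset.card_eq_sum_card_fiberwise fun u _ => Finset.mem_image_of_mem f (Finset.mem_univ u)
    have hCS : ((Finset.univ : Finset (Wrd n)).card : ℝ)^2
        ≤ (S.card : ℝ) * ∑ k ∈ S, ((Finset.univ.filter fun u => f u = k).card : ℝ)^2 := by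
      rw [hfib]
      push_cast
      exact sq_sum_le_card_mul_sum_sq
    have hPsame : ∑ k ∈ S, ((Finset.univ.filter fun u => f u = k).card)^2
        = (Finset.univ.filter fun p : Wrd n × Wrd n => f p.1 = f p.2).card := by
      rw [Finset.card_eq_sum_card_fiberwise
        (f := fun p : Wrd n × Wrd n => f p.1) (t := S)
        (fun p hp => Finset.mem_image_of_mem _ (Finset.mem_univ p.1))]
      refine Finset.sum_congr rfl fun k _ => ?_
      have : (Finset.univ.filter fun p : Wrd n × Wrd n => f p.1 = f p.2).filter
            (fun p => f p.1 = k)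
          = (Finset.univ.filter fun u => f u = k) ×ˢ (Finset.univ.filter fun u => f u = k) := by
        ext ⟨u, v⟩
        simp only [Finset.mem_filter, Finset.mem_product, Finset.mem_univ, true_and,
          Finset.filter_filter]
        constructor
        · rintro ⟨h1, h2⟩
          exact ⟨h2, h1 ▸ h2⟩
        · rintro ⟨h1, h2⟩
          exact ⟨h1.trans h2.symm, h1⟩
      rw [this, Finset.card_product, sq]
    have hPclose : (Finset.univ.filter fun p : Wrd n × Wrd n => f p.1 = f p.2).card
        ≤ (Finset.univ.filter
            fun p : Wrd n × Wrd n => |zf θ p.1 - zf θ p.2| ≤ 2 * dl n).card := by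
      apply Finset.card_le_card
      intro p hp
      have hfp := (Finset.mem_filter.1 hp).2
      refine Finset.mem_filter.2 ⟨Finset.mem_univ _, ?_⟩
      have h2δ : (0:ℝ) < 2*δ := by linarith
      have h1 : zf θ p.1 / (2*δ) < f p.1 + 1 := Int.lt_floor_add_one _
      have h2 : (f p.1 : ℝ) ≤ zf θ p.1 / (2*δ) := Int.floor_le _
      have h3 : zf θ p.2 / (2*δ) < f p.2 + 1 := Int.lt_floor_add_one _
      have h4 : (f p.2 : ℝ) ≤ zf θ p.2 / (2*δ) := Int.floor_le _
      rw [hfp] at h1 h2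
      have h5 : |zf θ p.1 / (2*δ) - zf θ p.2 / (2*δ)| < 1 := by
        rw [abs_lt]; constructor <;> linarith
      rw [div_sub_div_same, abs_div, abs_of_pos h2δ, div_lt_one h2δ] at h5
      rw [← hδ]
      linarith
    calc ((4:ℝ)^n)^2 = ((Finset.univ : Finset (Wrd n)).card : ℝ)^2 := by
          rw [hcard]; push_cast; ring
      _ ≤ (S.card : ℝ) * ∑ k ∈ S, ((Finset.univ.filter fun u => f u = k).card : ℝ)^2 := hCS
      _ = (S.card : ℝ) * ((∑ k ∈ S, ((Finset.univ.filter fun u => f u = k).card)^2 : ℕ) : ℝ) := by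
          push_cast; ring
      _ ≤ (S.card : ℝ) * T := by
          apply mul_le_mul_of_nonneg_left ?_ (by positivity)
          exact_mod_cast (hPsame ▸ hPclose).trans hQ
  -- combine
  have hfinal : ENNReal.ofReal ((4:ℝ)^n * (4:ℝ)^n * δ / (4 * T)) * 2 ≤ (2 * volume U) := by
    calc ENNReal.ofReal ((4:ℝ)^n * (4:ℝ)^n * δ / (4 * T)) * 2
        = ENNReal.ofReal ((4:ℝ)^n * (4:ℝ)^n * δ / (4 * T) * 2) := by
          rw [ENNReal.ofReal_mul' (by norm_num)]; norm_num
      _ ≤ ENNReal.ofReal ((S.card : ℝ) * (δ/2)) := by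
          apply ENNReal.ofReal_le_ofReal
          rw [div_mul_eq_mul_div, div_le_iff₀ (by positivity : (0:ℝ) < 4 * T)]
          nlinarith [hB, hδ0]
      _ = (S.card : ℝ≥0∞) * ENNReal.ofReal (δ/2) := by
          rw [ENNReal.ofReal_mul (by positivity), ENNReal.ofReal_natCast]
      _ ≤ 2 * volume U := hA
  have h2 : (ENNReal.ofReal ((4:ℝ)^n * (4:ℝ)^n * δ / (4 * T))) * 2 ≤ volume U * 2 := by
    rw [mul_comm (volume U) 2]; exact hfinal
  exact (ENNReal.mul_le_mul_iff_left (by norm_num) (by norm_num)).1 h2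

end Pointwise

noncomputable section Integral
open scoped ENNReal

lemma angle_meas {v₁ v₂ s r : ℝ} (hr : 0 < r) (hs : 0 ≤ s)
    (h1 : r ≤ |v₁| ∨ r ≤ |v₂|) :
    volume {θ ∈ Ico (0:ℝ) π | |v₁ * Real.cos θ + v₂ * Real.sin θ| ≤ s}
      ≤ ENNReal.ofReal (2*π*s/r) := by
  set R : ℝ := Real.sqrt (v₁^2 + v₂^2) with hR
  have hrR : r ≤ R := by
    rcases h1 with h | h
    · calc r ≤ |v₁| := h
        _ = Real.sqrt (v₁^2) := (Real.sqrt_sq_eq_abs v₁).symm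
        _ ≤ R := Real.sqrt_le_sqrt (by nlinarith [sq_nonneg v₂])
    · calc r ≤ |v₂| := h
        _ = Real.sqrt (v₂^2) := (Real.sqrt_sq_eq_abs v₂).symm
        _ ≤ R := Real.sqrt_le_sqrt (by nlinarith [sq_nonneg v₁])
  have hR0 : 0 < R := lt_of_lt_of_le hr hrR
  set z : ℂ := ⟨v₁, v₂⟩ with hz
  have hzne : z ≠ 0 := by
    intro hcontr
    rcases h1 with h | h
    · rw [hcontr] at hz
      have : v₁ = 0 := by simpa using congrArg Complex.re hz.symm
      rw [this] at h; simp at h; linarith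
    · rw [hcontr] at hz
      have : v₂ = 0 := by simpa using congrArg Complex.im hz.symm
      rw [this] at h; simp at h; linarith
  have habs : ‖z‖ = R := by
    rw [Complex.norm_def, Complex.normSq_mk]
    congr 1; ring
  set φ : ℝ := Complex.arg z with hφ
  have hcos : Real.cos φ = v₁ / R := by rw [hφ, Complex.cos_arg hzne, habs]
  have hsin : Real.sin φ = v₂ / R := by rw [hφ, Complex.sin_arg, habs]
  set ρ : ℝ := π * s / (2*r) with hρ
  set m₀ : ℤ := ⌊-φ/π⌋ with hm₀
  have hsubset : {θ ∈ Ico (0:ℝ) π | |v₁ * Real.cos θ + v₂ * Real.sin θ| ≤ s}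
      ⊆ Metric.closedBall (φ + π/2 + m₀*π) ρ ∪ Metric.closedBall (φ + π/2 + (m₀+1)*π) ρ := by
    rintro θ ⟨⟨hθ0, hθπ⟩, hθs⟩
    have hkey : v₁ * Real.cos θ + v₂ * Real.sin θ = R * Real.cos (θ - φ) := by
      rw [Real.cos_sub, hcos, hsin]
      field_simp
    have hcos_small : |Real.cos (θ - φ)| ≤ s / R := by
      rw [hkey, abs_mul, abs_of_pos hR0] at hθs
      rw [le_div_iff₀ hR0, mul_comm]
      exact hθs
    set m : ℤ := ⌊(θ - φ)/π⌋ with hm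
    set ψ : ℝ := θ - φ - m*π with hψ
    have hπ := Real.pi_pos
    have hfl : (m:ℝ) ≤ (θ - φ)/π := Int.floor_le _
    have hfl' : (θ - φ)/π < m + 1 := Int.lt_floor_add_one _
    have hml : (m:ℝ) * π ≤ θ - φ := by
      have := (le_div_iff₀ hπ).1 hfl; linarith
    have hmu : θ - φ < ((m:ℝ) + 1) * π := by
      have := (div_lt_iff₀ hπ).1 hfl'; linarith
    have hψ0 : 0 ≤ ψ := by rw [hψ]; linarith
    have hψπ : ψ < π := by rw [hψ]; nlinarith
    -- |cos ψ| = |cos (θ - φ)|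
    have hcosψ : |Real.cos ψ| = |Real.cos (θ - φ)| := by
      have habs1 : |((-1:ℝ))^m| = 1 := by
        rcases Int.even_or_odd m with ⟨c, hc⟩ | ⟨c, hc⟩
        · rw [hc, show c + c = 2*c by ring, zpow_mul]; norm_num
        · rw [hc, zpow_add₀ (by norm_num : (-1:ℝ) ≠ 0), zpow_mul]; norm_num
      rw [hψ, show θ - φ - (m:ℝ)*π = θ - φ - ((m:ℝ)*π) by ring,
        Real.cos_sub_int_mul_pi, abs_mul, habs1, one_mul]
    set t : ℝ := π/2 - ψ with ht
    have habs_t : |t| ≤ π/2 := by rw [ht, abs_le]; constructor <;> linarith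
    have hsin_t : |Real.sin t| = |Real.cos ψ| := by
      rw [ht, Real.sin_pi_div_two_sub]
    have hjordan := Real.mul_abs_le_abs_sin habs_t
    have htle : |t| ≤ (π/2) * (s/R) := by
      have h2π : (0:ℝ) < 2/π := by positivity
      have : 2/π * |t| ≤ s/R := by
        calc 2/π * |t| ≤ |Real.sin t| := hjordan
          _ = |Real.cos ψ| := hsin_t
          _ = |Real.cos (θ - φ)| := hcosψ
          _ ≤ s/R := hcos_small
      calc |t| = (π/2) * (2/π * |t|) := by field_simp
        _ ≤ (π/2) * (s/R) := by
            apply mul_le_mul_of_nonneg_left this (by positivity)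
    have hm_lb : m₀ ≤ m := by
      rw [hm₀, hm]
      apply Int.floor_le_floor
      apply div_le_div_of_nonneg_right (by linarith) hπ.le |>.trans_eq rfl
    have hm_ub : m ≤ m₀ + 1 := by
      have hfl₀ : -φ/π < m₀ + 1 := Int.lt_floor_add_one _
      have : (θ - φ)/π < (m₀:ℝ) + 2 := by
        have h2 : (θ - φ)/π < -φ/π + 1 := by
          rw [div_add' _ _ _ hπ.ne', div_lt_div_iff_of_pos_right hπ]
          linarith
        push_cast
        linarith
      have h4 : m < m₀ + 2 := by
        rw [hm, Int.floor_lt]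
        push_cast
        linarith
      omega
    have hmem : |θ - (φ + π/2 + (m:ℝ)*π)| ≤ ρ := by
      have : θ - (φ + π/2 + (m:ℝ)*π) = -t := by rw [ht, hψ]; ring
      rw [this, abs_neg, hρ]
      calc |t| ≤ (π/2) * (s/R) := htle
        _ ≤ (π/2) * (s/r) :=
            mul_le_mul_of_nonneg_left (div_le_div_of_nonneg_left hs hr hrR) (by positivity)
        _ = π * s / (2*r) := by ring
    rcases eq_or_lt_of_le hm_lb with heq | hlt
    · left
      rw [Metric.mem_closedBall, Real.dist_eq, heq]
      exact hmem
    · right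
      have heq2 : m = m₀ + 1 := le_antisymm hm_ub hlt
      have hcast : ((m₀:ℝ) + 1) = (m:ℝ) := by rw [heq2]; push_cast; ring
      rw [Metric.mem_closedBall, Real.dist_eq, hcast]
      exact hmem
  calc volume {θ ∈ Ico (0:ℝ) π | |v₁ * Real.cos θ + v₂ * Real.sin θ| ≤ s}
      ≤ volume (Metric.closedBall (φ + π/2 + m₀*π) ρ ∪ Metric.closedBall (φ + π/2 + (m₀+1)*π) ρ) :=
        measure_mono hsubset
    _ ≤ volume (Metric.closedBall (φ + π/2 + (m₀:ℝ)*π) ρ)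
        + volume (Metric.closedBall (φ + π/2 + ((m₀:ℝ)+1)*π) ρ) := measure_union_le _ _
    _ = ENNReal.ofReal (2*ρ) + ENNReal.ofReal (2*ρ) := by rw [Real.volume_closedBall, Real.volume_closedBall]
    _ ≤ ENNReal.ofReal (2*π*s/r) := by
        rw [← ENNReal.ofReal_add (by positivity) (by positivity)]
        apply ENNReal.ofReal_le_ofReal
        rw [hρ]; field_simp; ring_nf; linarith [Real.pi_pos]


def Apair {n : ℕ} (p : Wrd n × Wrd n) : Set ℝ :=
  {θ : ℝ | |zf θ p.1 - zf θ p.2| ≤ 2 * dl n}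

lemma zf_cont {n : ℕ} (u : Wrd n) : Continuous fun θ => zf θ u := by
  show Continuous fun θ => xw u * Real.cos θ + yw u * Real.sin θ
  fun_prop

lemma Apair_meas {n : ℕ} (p : Wrd n × Wrd n) : MeasurableSet (Apair p) := by
  have h : Continuous fun θ => |zf θ p.1 - zf θ p.2| :=
    ((zf_cont p.1).sub (zf_cont p.2)).abs
  exact (isClosed_le h continuous_const).measurableSet

def Qe (n : ℕ) (θ : ℝ) : ℝ≥0∞ :=
  ∑ p : Wrd n × Wrd n, (Apair p).indicator (fun _ => 1) θ

lemma Qe_meas (n : ℕ) : Measurable (Qe n) := by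
  apply Finset.measurable_sum
  exact fun p _ => measurable_const.indicator (Apair_meas p)

lemma Qe_card (n : ℕ) (θ : ℝ) :
    Qe n θ = ((Finset.univ.filter
      fun p : Wrd n × Wrd n => |zf θ p.1 - zf θ p.2| ≤ 2 * dl n).card : ℝ≥0∞) := by
  classical
  rw [Qe, Finset.card_filter, Nat.cast_sum]
  refine Finset.sum_congr rfl fun p _ => ?_
  by_cases h : |zf θ p.1 - zf θ p.2| ≤ 2 * dl n
  · simp [Set.indicator_apply, Apair, Set.mem_setOf_eq, h]
  · simp [Set.indicator_apply, Apair, Set.mem_setOf_eq, h]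

open Finset in
lemma count_pairs {n : ℕ} (k : Fin n) :
    (Finset.univ.filter fun p : Wrd n × Wrd n =>
      (∀ j, j < k → p.1 j = p.2 j) ∧ p.1 k ≠ p.2 k).card ≤ 4^n * 4^(n - (k:ℕ)) := by
  classical
  have hcard : Fintype.card (Wrd n × (Set.Ici k → Bool × Bool)) = 4^n * 4^(n - (k:ℕ)) := by
    rw [Fintype.card_prod, Fintype.card_fun, Fintype.card_fun]
    simp [← Set.toFinset_card, Set.toFinset_Ici, Fin.card_Ici]
  calc (Finset.univ.filter fun p : Wrd n × Wrd n =>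
        (∀ j, j < k → p.1 j = p.2 j) ∧ p.1 k ≠ p.2 k).card
      ≤ (Finset.univ : Finset (Wrd n × (Set.Ici k → Bool × Bool))).card := by
        apply Finset.card_le_card_of_injOn
          (fun p => (p.1, fun j => p.2 j.1))
          (fun _ _ => Finset.mem_univ _)
        intro p hp q hq hpq
        simp only [Finset.coe_filter, Set.mem_setOf_eq] at hp hq
        simp only [Prod.mk.injEq] at hpq
        obtain ⟨h1, h2⟩ := hpq
        refine Prod.ext h1 (funext fun j => ?_)
        rcases lt_or_ge j k with hj | hj
        · rw [← hp.2.1 j hj, ← hq.2.1 j hj, h1]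
        · exact congrFun h2 ⟨j, hj⟩
    _ = 4^n * 4^(n - (k:ℕ)) := by rw [Finset.card_univ, hcard]

open Finset in
lemma offdiag_pair_bound {n : ℕ} (k : Fin n) {p : Wrd n × Wrd n}
    (hagree : ∀ j, j < k → p.1 j = p.2 j) (hdiff : p.1 k ≠ p.2 k) :
    volume (Apair p ∩ Ico (0:ℝ) π)
      ≤ ENNReal.ofReal (2 * π * (2 * dl n) / (2 * (1/4:ℝ)^((k:ℕ)+1))) := by
  set v₁ : ℝ := xw p.1 - xw p.2 with hv₁
  set v₂ : ℝ := yw p.1 - yw p.2 with hv₂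
  have hsep : 2 * (1/4:ℝ)^((k:ℕ)+1) ≤ |v₁| ∨ 2 * (1/4:ℝ)^((k:ℕ)+1) ≤ |v₂| := by
    by_cases h1 : (p.1 k).1 = (p.2 k).1
    · right
      have h2 : (p.1 k).2 ≠ (p.2 k).2 := fun h2 => hdiff (Prod.ext h1 h2)
      exact hv₂ ▸ cantorX_sep k (fun j hj => by rw [hagree j hj]) h2
    · left
      exact hv₁ ▸ cantorX_sep k (fun j hj => by rw [hagree j hj]) h1
  have hset : Apair p ∩ Ico (0:ℝ) π
      = {θ ∈ Ico (0:ℝ) π | |v₁ * Real.cos θ + v₂ * Real.sin θ| ≤ 2 * dl n} := by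
    ext θ
    simp only [Apair, Set.mem_inter_iff, Set.mem_setOf_eq, Set.mem_sep_iff]
    have : zf θ p.1 - zf θ p.2 = v₁ * Real.cos θ + v₂ * Real.sin θ := by
      rw [hv₁, hv₂, zf, zf]; ring
    rw [this]
    tauto
  rw [hset]
  exact angle_meas (by positivity) (by have := dl_pos n; linarith : (0:ℝ) ≤ 2 * dl n) hsep

open Finset in
lemma integral_Qe_bound {n : ℕ} (hn : 1 ≤ n) :
    ∫⁻ θ in Ico (0:ℝ) π, Qe n θ ≤ ENNReal.ofReal (9 * π * n * 4^n) := by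
  classical
  have hswap : ∫⁻ θ in Ico (0:ℝ) π, Qe n θ
      = ∑ p : Wrd n × Wrd n, volume (Apair p ∩ Ico (0:ℝ) π) := by
    simp only [Qe]
    rw [lintegral_finset_sum]
    · refine Finset.sum_congr rfl fun p _ => ?_
      rw [lintegral_indicator_const (Apair_meas p), one_mul,
        Measure.restrict_apply (Apair_meas p)]
    · exact fun p _ => measurable_const.indicator (Apair_meas p)
  rw [hswap]
  set Pk : Fin n → Finset (Wrd n × Wrd n) := fun k =>
    Finset.univ.filter fun p : Wrd n × Wrd n =>
      (∀ j, j < k → p.1 j = p.2 j) ∧ p.1 k ≠ p.2 k with hPk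
  have hsum : ∑ p : Wrd n × Wrd n, volume (Apair p ∩ Ico (0:ℝ) π)
      = (∑ p ∈ Finset.univ.filter (fun p : Wrd n × Wrd n => p.1 = p.2),
          volume (Apair p ∩ Ico (0:ℝ) π))
        + ∑ p ∈ Finset.univ.filter (fun p : Wrd n × Wrd n => ¬ p.1 = p.2),
          volume (Apair p ∩ Ico (0:ℝ) π) :=
    (Finset.sum_filter_add_sum_filter_not _ _ _).symm
  -- diagonal bound
  have hdiag_card : (Finset.univ.filter (fun p : Wrd n × Wrd n => p.1 = p.2)).card ≤ 4^n := by
    have : (Finset.univ.filter (fun p : Wrd n × Wrd n => p.1 = p.2)).card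
        ≤ (Finset.univ : Finset (Wrd n)).card := by
      apply Finset.card_le_card_of_injOn (fun p => p.1) (fun _ _ => Finset.mem_univ _)
      intro p hp q hq hpq
      simp only [Finset.coe_filter, Set.mem_setOf_eq] at hp hq
      replace hpq : p.1 = q.1 := hpq
      exact Prod.ext hpq (by rw [← hp.2, ← hq.2, hpq])
    simpa [Fintype.card_fun] using this
  have hvol_le : ∀ p : Wrd n × Wrd n, volume (Apair p ∩ Ico (0:ℝ) π) ≤ ENNReal.ofReal π := by
    intro p
    calc volume (Apair p ∩ Ico (0:ℝ) π) ≤ volume (Ico (0:ℝ) π) :=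
          measure_mono Set.inter_subset_right
      _ = ENNReal.ofReal π := by rw [Real.volume_Ico, sub_zero]
  have hdiag : ∑ p ∈ Finset.univ.filter (fun p : Wrd n × Wrd n => p.1 = p.2),
      volume (Apair p ∩ Ico (0:ℝ) π) ≤ ENNReal.ofReal (π * 4^n) := by
    calc ∑ p ∈ Finset.univ.filter (fun p : Wrd n × Wrd n => p.1 = p.2),
        volume (Apair p ∩ Ico (0:ℝ) π)
        ≤ (Finset.univ.filter (fun p : Wrd n × Wrd n => p.1 = p.2)).card • ENNReal.ofReal π :=
          Finset.sum_le_card_nsmul _ _ _ (fun p _ => hvol_le p)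
      _ ≤ (4^n : ℕ) • ENNReal.ofReal π := nsmul_le_nsmul_left zero_le hdiag_card
      _ = ENNReal.ofReal (π * 4^n) := by
          rw [nsmul_eq_mul, ← ENNReal.ofReal_natCast, ← ENNReal.ofReal_mul (by positivity)]
          push_cast
          ring_nf
  -- off-diagonal bound
  have hcover : Finset.univ.filter (fun p : Wrd n × Wrd n => ¬ p.1 = p.2)
      ⊆ Finset.univ.biUnion Pk := by
    intro p hp
    have hne : p.1 ≠ p.2 := (Finset.mem_filter.1 hp).2
    have hexists : (Finset.univ.filter fun j : Fin n => p.1 j ≠ p.2 j).Nonempty := by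
      by_contra h
      rw [Finset.not_nonempty_iff_eq_empty, Finset.filter_eq_empty_iff] at h
      exact hne (funext fun j => not_not.1 (h (Finset.mem_univ j)))
    set k := Finset.min' _ hexists with hk
    refine Finset.mem_biUnion.2 ⟨k, Finset.mem_univ k,
      Finset.mem_filter.2 ⟨Finset.mem_univ _, fun j hj => ?_, ?_⟩⟩
    · by_contra hne'
      exact absurd (Finset.min'_le _ j (Finset.mem_filter.2 ⟨Finset.mem_univ _, hne'⟩))
        (not_le.2 hj)
    · exact (Finset.mem_filter.1 (Finset.min'_mem _ hexists)).2
  have hdisj : (↑(Finset.univ : Finset (Fin n)) : Set (Fin n)).PairwiseDisjoint Pk := by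
    intro k _ k' _ hne
    show Disjoint (Pk k) (Pk k')
    rw [Finset.disjoint_left]
    intro p hpk hpk'
    obtain ⟨_, hag, hdf⟩ := Finset.mem_filter.1 hpk
    obtain ⟨_, hag', hdf'⟩ := Finset.mem_filter.1 hpk'
    rcases lt_or_gt_of_ne hne with hlt | hgt
    · exact hdf (hag' k hlt)
    · exact hdf' (hag k' hgt)
  have hoffk : ∀ k : Fin n, ∑ p ∈ Pk k, volume (Apair p ∩ Ico (0:ℝ) π)
      ≤ ENNReal.ofReal (8 * π * 4^n) := by
    intro k
    have hbd : ∀ p ∈ Pk k, volume (Apair p ∩ Ico (0:ℝ) π)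
        ≤ ENNReal.ofReal (2 * π * (2 * dl n) / (2 * (1/4:ℝ)^((k:ℕ)+1))) := by
      intro p hp
      obtain ⟨_, hag, hdf⟩ := Finset.mem_filter.1 hp
      exact offdiag_pair_bound k hag hdf
    calc ∑ p ∈ Pk k, volume (Apair p ∩ Ico (0:ℝ) π)
        ≤ (Pk k).card • ENNReal.ofReal (2 * π * (2 * dl n) / (2 * (1/4:ℝ)^((k:ℕ)+1))) :=
          Finset.sum_le_card_nsmul _ _ _ hbd
      _ ≤ (4^n * 4^(n - (k:ℕ)) : ℕ)
            • ENNReal.ofReal (2 * π * (2 * dl n) / (2 * (1/4:ℝ)^((k:ℕ)+1))) :=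
          nsmul_le_nsmul_left zero_le (count_pairs k)
      _ ≤ ENNReal.ofReal (8 * π * 4^n) := by
          rw [nsmul_eq_mul, ← ENNReal.ofReal_natCast, ← ENNReal.ofReal_mul (by positivity)]
          apply le_of_eq
          congr 1
          have hk4 : (0:ℝ) < (4:ℝ)^(k:ℕ) := by positivity
          have hsplitpow : (4:ℝ)^(n-(k:ℕ)) = (4:ℝ)^n / (4:ℝ)^(k:ℕ) := by
            rw [eq_div_iff hk4.ne', ← pow_add]
            congr 1
            omega
          have hdl : dl n = ((4:ℝ)^n)⁻¹ := by rw [dl, one_div, inv_pow]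
          have hq : (1/4:ℝ)^((k:ℕ)+1) = ((4:ℝ)^((k:ℕ)+1))⁻¹ := by rw [one_div, inv_pow]
          have hpow1 : (4:ℝ)^((k:ℕ)+1) = 4 * (4:ℝ)^(k:ℕ) := by rw [pow_succ]; ring
          push_cast
          rw [hdl, hq, hsplitpow, hpow1]
          have h2 : (0:ℝ) < (4:ℝ)^n := by positivity
          field_simp
          ring
  have hoff : ∑ p ∈ Finset.univ.filter (fun p : Wrd n × Wrd n => ¬ p.1 = p.2),
      volume (Apair p ∩ Ico (0:ℝ) π) ≤ ENNReal.ofReal (8 * π * n * 4^n) := by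
    calc ∑ p ∈ Finset.univ.filter (fun p : Wrd n × Wrd n => ¬ p.1 = p.2),
        volume (Apair p ∩ Ico (0:ℝ) π)
        ≤ ∑ p ∈ Finset.univ.biUnion Pk, volume (Apair p ∩ Ico (0:ℝ) π) :=
          Finset.sum_le_sum_of_subset hcover
      _ = ∑ k : Fin n, ∑ p ∈ Pk k, volume (Apair p ∩ Ico (0:ℝ) π) :=
          Finset.sum_biUnion hdisj
      _ ≤ ∑ _k : Fin n, ENNReal.ofReal (8 * π * 4^n) := Finset.sum_le_sum fun k _ => hoffk k
      _ = (n : ℕ) • ENNReal.ofReal (8 * π * 4^n) := by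
          rw [Finset.sum_const, Finset.card_univ, Fintype.card_fin]
      _ = ENNReal.ofReal (8 * π * n * 4^n) := by
          rw [nsmul_eq_mul, ← ENNReal.ofReal_natCast, ← ENNReal.ofReal_mul (by positivity)]
          ring_nf
  rw [hsum]
  calc (∑ p ∈ Finset.univ.filter (fun p : Wrd n × Wrd n => p.1 = p.2),
          volume (Apair p ∩ Ico (0:ℝ) π))
        + ∑ p ∈ Finset.univ.filter (fun p : Wrd n × Wrd n => ¬ p.1 = p.2),
          volume (Apair p ∩ Ico (0:ℝ) π)
      ≤ ENNReal.ofReal (π * 4^n) + ENNReal.ofReal (8 * π * n * 4^n) := add_le_add hdiag hoff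
    _ = ENNReal.ofReal (π * 4^n + 8 * π * n * 4^n) := by
        rw [← ENNReal.ofReal_add (by positivity) (by positivity)]
    _ ≤ ENNReal.ofReal (9 * π * n * 4^n) := by
        apply ENNReal.ofReal_le_ofReal
        have hp4 : (0:ℝ) < 4^n := by positivity
        have hn1 : (1:ℝ) ≤ n := by exact_mod_cast hn
        have key : π * 4^n * 1 ≤ π * 4^n * n :=
          mul_le_mul_of_nonneg_left hn1 (by positivity)
        nlinarith [key]

end Integral


open scoped ENNReal

/-- There exists `c > 0` such that for every `n ≥ 1`, the set of angles
`θ ∈ [0, π)` with `|proj_θ(K_n)| ≥ c / n` has Lebesgue measure at least `π / 2`: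
the median of the projection length is at least `c / n`. -/
theorem median_projection_cantorK_ge : ∃ c : ℝ, 0 < c ∧ ∀ n : ℕ, 1 ≤ n →
    ENNReal.ofReal (π / 2) ≤
      volume {θ ∈ Ico (0 : ℝ) π |
        c / n ≤ (volume (projAngle θ '' cantorK n)).toReal} := by
  classical
  refine ⟨1/144, by norm_num, fun n hn => ?_⟩
  set T : ℕ := 36 * n * 4^n with hT
  have hT0 : 0 < T := by positivity
  set Bad : Set ℝ := Ico (0:ℝ) π ∩ {θ | (T : ℝ≥0∞) ≤ Qe n θ} with hBad
  set Good : Set ℝ := Ico (0:ℝ) π ∩ {θ | ¬ ((T : ℝ≥0∞) ≤ Qe n θ)} with hGood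
  have hQmeas := Qe_meas n
  have hmarkov : (T : ℝ≥0∞) * volume Bad ≤ ENNReal.ofReal (9 * π * n * 4^n) := by
    calc (T : ℝ≥0∞) * volume Bad = ∫⁻ _θ in Bad, (T : ℝ≥0∞) := by
          rw [setLIntegral_const]
      _ ≤ ∫⁻ θ in Bad, Qe n θ := setLIntegral_mono hQmeas (fun θ hθ => hθ.2)
      _ ≤ ∫⁻ θ in Ico (0:ℝ) π, Qe n θ :=
          lintegral_mono_set Set.inter_subset_left
      _ ≤ ENNReal.ofReal (9 * π * n * 4^n) := integral_Qe_bound hn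
  have hbad_vol : volume Bad ≤ ENNReal.ofReal (π/4) := by
    have h9 : ENNReal.ofReal (9 * π * (n:ℝ) * 4^n) = (T : ℝ≥0∞) * ENNReal.ofReal (π/4) := by
      rw [← ENNReal.ofReal_natCast, ← ENNReal.ofReal_mul (by positivity)]
      congr 1
      rw [hT]; push_cast; ring
    rw [h9] at hmarkov
    exact (ENNReal.mul_le_mul_iff_right (by exact_mod_cast hT0.ne') (ENNReal.natCast_ne_top T)).1
      hmarkov
  have hIco : volume (Ico (0:ℝ) π) = ENNReal.ofReal π := by rw [Real.volume_Ico, sub_zero]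
  have hsplit : volume (Ico (0:ℝ) π) ≤ volume Good + volume Bad := by
    refine le_trans (measure_mono ?_) (measure_union_le _ _)
    intro θ hθ
    by_cases h : (T : ℝ≥0∞) ≤ Qe n θ
    · exact Or.inr ⟨hθ, h⟩
    · exact Or.inl ⟨hθ, h⟩
  have hgood : ENNReal.ofReal (π/2) ≤ volume Good := by
    have h1 : ENNReal.ofReal π - ENNReal.ofReal (π/4) ≤ volume Good := by
      rw [tsub_le_iff_right]
      calc ENNReal.ofReal π = volume (Ico (0:ℝ) π) := hIco.symm
        _ ≤ volume Good + volume Bad := hsplit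
        _ ≤ volume Good + ENNReal.ofReal (π/4) := add_le_add_right hbad_vol _
    calc ENNReal.ofReal (π/2) ≤ ENNReal.ofReal π - ENNReal.ofReal (π/4) := by
          rw [← ENNReal.ofReal_sub _ (by positivity)]
          exact ENNReal.ofReal_le_ofReal (by linarith [Real.pi_pos])
      _ ≤ volume Good := h1
  refine le_trans hgood (measure_mono ?_)
  intro θ hθ
  obtain ⟨hθI, hθQ⟩ := hθ
  refine ⟨hθI, ?_⟩
  have hcard : (Finset.univ.filter
      fun p : Wrd n × Wrd n => |zf θ p.1 - zf θ p.2| ≤ 2 * dl n).card ≤ T := by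
    by_contra h
    push_neg at h
    exact hθQ (by rw [Qe_card]; exact_mod_cast h.le)
  have hlb := pointwise_lb θ T hT0 hcard
  have hC_comp : IsCompact (cantorC n) := isCompact_iUnion (fun a => isCompact_Icc)
  have hK_comp : IsCompact (cantorK n) := hC_comp.prod hC_comp
  have hproj_cont : Continuous (projAngle θ) := by
    show Continuous fun p : ℝ × ℝ => p.1 * Real.cos θ + p.2 * Real.sin θ
    fun_prop
  have hU_comp : IsCompact (projAngle θ '' cantorK n) := hK_comp.image hproj_cont
  have hfin : volume (projAngle θ '' cantorK n) ≠ ⊤ := hU_comp.measure_lt_top.ne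
  have hval : (1/144 : ℝ) / n = (4:ℝ)^n * (4:ℝ)^n * dl n / (4 * T) := by
    rw [dl, hT]
    have h4 : (0:ℝ) < (4:ℝ)^n := by positivity
    have hn0 : (0:ℝ) < n := by exact_mod_cast hn
    push_cast
    rw [div_eq_div_iff (by positivity) (by positivity)]
    field_simp
    rw [mul_assoc, ← mul_pow]; norm_num
  rw [hval]
  exact (ENNReal.ofReal_le_iff_le_toReal hfin).1 hlb
end

section
/- There exists a constant C > 0 such that for every natural number n ≥ 1, ∫₀^π ∫_ℝ f_{n,θ}(x)² dx dθ ≤ C·n, where f_{n,θ}(x) is the number of squares of the n-th generation four-corner Cantor set whose θ-projection contains x. -/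
open MeasureTheory Real Set

noncomputable section

/-- `f_{n,θ}(x)`: the number of squares `Q_{a,b}` of the `n`-th generation whose
`θ`-projection contains `x`. -/
def projMultiplicity (n : ℕ) (θ x : ℝ) : ℕ :=
  Nat.card {p : (Fin n → Bool) × (Fin n → Bool) | x ∈ projAngle θ '' cantorSq p.1 p.2}

end

namespace CP
open Finset

abbrev W (n : ℕ) := (Fin n → Bool) × (Fin n → Bool)

noncomputable def del (n : ℕ) : ℝ := (4:ℝ) ^ (-(n:ℤ))

lemma del_pos {n : ℕ} : 0 < del n := zpow_pos (by norm_num) _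

noncomputable def rad (n : ℕ) (θ : ℝ) : ℝ := (|Real.cos θ| + |Real.sin θ|) * del n / 2

lemma rad_nonneg {n : ℕ} (θ : ℝ) : 0 ≤ rad n θ := by
  unfold rad
  have := del_pos (n := n)
  positivity

lemma rad_le {n : ℕ} (θ : ℝ) : rad n θ ≤ del n := by
  unfold rad
  have h1 : |Real.cos θ| ≤ 1 := Real.abs_cos_le_one θ
  have h2 : |Real.sin θ| ≤ 1 := Real.abs_sin_le_one θ
  have := del_pos (n := n)
  nlinarith

noncomputable def ctr (n : ℕ) (θ : ℝ) (p : W n) : ℝ :=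
  (cantorX p.1 + del n / 2) * Real.cos θ + (cantorX p.2 + del n / 2) * Real.sin θ

noncomputable def hpair (n : ℕ) (p q : W n) (θ : ℝ) : ℝ :=
  max 0 (2 * rad n θ - |ctr n θ p - ctr n θ q|)

lemma hpair_nonneg {n : ℕ} (p q : W n) (θ : ℝ) : 0 ≤ hpair n p q θ := le_max_left _ _

lemma hpair_le {n : ℕ} (p q : W n) (θ : ℝ) : hpair n p q θ ≤ 2 * del n := by
  unfold hpair
  have h1 := rad_le (n := n) θ
  have h2 := abs_nonneg (ctr n θ p - ctr n θ q)
  have := del_pos (n := n)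
  apply max_le <;> nlinarith

lemma hpair_continuous {n : ℕ} (p q : W n) : Continuous (hpair n p q) := by
  unfold hpair rad ctr
  fun_prop

lemma image_subset_Icc {n : ℕ} (θ : ℝ) (p : W n) :
    projAngle θ '' cantorSq p.1 p.2 ⊆ Icc (ctr n θ p - rad n θ) (ctr n θ p + rad n θ) := by
  rintro z ⟨⟨x, y⟩, hxy, rfl⟩
  obtain ⟨⟨hx1, hx2⟩, ⟨hy1, hy2⟩⟩ := hxy
  have hd : (4:ℝ) ^ (-(n:ℤ)) = del n := rfl
  rw [hd] at hx2 hy2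
  have key : |projAngle θ (x, y) - ctr n θ p| ≤ rad n θ := by
    have h1 : projAngle θ (x, y) - ctr n θ p
        = (x - cantorX p.1 - del n / 2) * Real.cos θ + (y - cantorX p.2 - del n / 2) * Real.sin θ := by
      unfold projAngle ctr; ring
    rw [h1]
    have h2 : |(x - cantorX p.1 - del n / 2) * Real.cos θ + (y - cantorX p.2 - del n / 2) * Real.sin θ|
        ≤ |x - cantorX p.1 - del n / 2| * |Real.cos θ| + |y - cantorX p.2 - del n / 2| * |Real.sin θ| := by
      calc _ ≤ |(x - cantorX p.1 - del n / 2) * Real.cos θ| + |(y - cantorX p.2 - del n / 2) * Real.sin θ| :=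
            abs_add_le _ _
        _ = _ := by rw [abs_mul, abs_mul]
    have h3 : |x - cantorX p.1 - del n / 2| ≤ del n / 2 := by
      rw [abs_le]; constructor <;> linarith
    have h4 : |y - cantorX p.2 - del n / 2| ≤ del n / 2 := by
      rw [abs_le]; constructor <;> linarith
    have h5 : (0:ℝ) ≤ |Real.cos θ| := abs_nonneg _
    have h6 : (0:ℝ) ≤ |Real.sin θ| := abs_nonneg _
    calc _ ≤ |x - cantorX p.1 - del n / 2| * |Real.cos θ| + |y - cantorX p.2 - del n / 2| * |Real.sin θ| := h2
      _ ≤ (del n / 2) * |Real.cos θ| + (del n / 2) * |Real.sin θ| := by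
          apply add_le_add (mul_le_mul_of_nonneg_right h3 h5) (mul_le_mul_of_nonneg_right h4 h6)
      _ = rad n θ := by unfold rad; ring
  rw [abs_le] at key
  constructor <;> linarith [key.1, key.2]

lemma mult_le {n : ℕ} (θ x : ℝ) :
    (projMultiplicity n θ x : ℝ)
      ≤ ∑ p : W n, (Icc (ctr n θ p - rad n θ) (ctr n θ p + rad n θ)).indicator (fun _ => (1:ℝ)) x := by
  classical
  have h1 : projMultiplicity n θ x
      = (Finset.univ.filter (fun p : W n => x ∈ projAngle θ '' cantorSq p.1 p.2)).card := by
    rw [projMultiplicity, Nat.card_eq_fintype_card]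
    simp [Fintype.card_subtype]
  rw [h1]
  rw [← Finset.sum_boole]
  apply Finset.sum_le_sum
  intro p _
  by_cases hp : x ∈ projAngle θ '' cantorSq p.1 p.2
  · rw [if_pos hp, Set.indicator_of_mem (image_subset_Icc θ p hp)]
  · rw [if_neg hp]
    exact Set.indicator_nonneg (fun _ _ => zero_le_one) x

lemma vol_inter (A B r : ℝ) :
    (volume (Icc (A - r) (A + r) ∩ Icc (B - r) (B + r))).toReal ≤ max 0 (2 * r - |A - B|) := by
  rw [Set.Icc_inter_Icc, Real.volume_Icc]
  have key : (B - r) ⊔ (A - r) ≤ (A + r) ⊓ (B + r) →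
      (A + r) ⊓ (B + r) - ((A - r) ⊔ (B - r)) = 2 * r - |A - B| := by
    intro _
    rcases le_total A B with h | h
    · rw [min_eq_left (by linarith), max_eq_right (by linarith), abs_of_nonpos (by linarith)]; ring
    · rw [min_eq_right (by linarith), max_eq_left (by linarith), abs_of_nonneg (by linarith)]; ring
  rcases le_total ((A + r) ⊓ (B + r) - ((A - r) ⊔ (B - r))) 0 with h | h
  · rw [ENNReal.ofReal_of_nonpos h]
    simp
  · rw [ENNReal.toReal_ofReal h]
    have heq : (A + r) ⊓ (B + r) - ((A - r) ⊔ (B - r)) = 2 * r - |A - B| := by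
      apply key
      rw [max_comm] at h
      linarith
    rw [heq] at h ⊢
    exact le_max_of_le_right le_rfl

lemma inner_le {n : ℕ} (θ : ℝ) :
    (∫ x : ℝ, (projMultiplicity n θ x : ℝ) ^ 2)
      ≤ ∑ w : W n × W n, hpair n w.1 w.2 θ := by
  classical
  set I : W n → Set ℝ := fun p => Icc (ctr n θ p - rad n θ) (ctr n θ p + rad n θ) with hI
  have hmeas : ∀ w : W n × W n, MeasurableSet (I w.1 ∩ I w.2) :=
    fun w => (measurableSet_Icc).inter measurableSet_Icc
  have hint : ∀ w : W n × W n, Integrable ((I w.1 ∩ I w.2).indicator (fun _ => (1:ℝ))) := by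
    intro w
    rw [integrable_indicator_iff (hmeas w)]
    refine integrableOn_const ?_
    exact (lt_of_le_of_lt (measure_mono Set.inter_subset_left) measure_Icc_lt_top).ne
  set G : ℝ → ℝ := fun x => ∑ w : W n × W n, (I w.1 ∩ I w.2).indicator (fun _ => (1:ℝ)) x with hG
  have hGint : Integrable G := integrable_finset_sum _ (fun w _ => hint w)
  have hpt : ∀ x : ℝ, (projMultiplicity n θ x : ℝ) ^ 2 ≤ G x := by
    intro x
    have h0 : (0:ℝ) ≤ (projMultiplicity n θ x : ℝ) := Nat.cast_nonneg _
    have h1 := mult_le (n := n) θ x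
    have h2 : (projMultiplicity n θ x : ℝ) ^ 2 ≤ (∑ p : W n, (I p).indicator (fun _ => (1:ℝ)) x) ^ 2 := by
      apply pow_le_pow_left₀ h0 h1
    refine h2.trans (le_of_eq ?_)
    rw [sq, Finset.sum_mul_sum]
    simp only [hG]
    rw [Fintype.sum_prod_type (f := fun w : W n × W n => (I w.1 ∩ I w.2).indicator (fun _ => (1:ℝ)) x)]
    refine Finset.sum_congr rfl fun i _ => Finset.sum_congr rfl fun j _ => ?_
    exact (congrFun (Set.inter_indicator_one (s := I i) (t := I j)) x).symm
  have hle : (∫ x : ℝ, (projMultiplicity n θ x : ℝ) ^ 2) ≤ ∫ x, G x :=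
    integral_mono_of_nonneg (Filter.Eventually.of_forall (fun x => sq_nonneg _)) hGint
      (Filter.Eventually.of_forall hpt)
  refine hle.trans ?_
  rw [hG, integral_finset_sum _ (fun w _ => hint w)]
  apply Finset.sum_le_sum
  intro w _
  have : (∫ x, (I w.1 ∩ I w.2).indicator (fun _ => (1:ℝ)) x) = (volume (I w.1 ∩ I w.2)).toReal := by
    exact integral_indicator_one (hmeas w)
  rw [this]
  exact vol_inter _ _ _

end CP
namespace CP
open Finset

lemma abs_cos_int_mul_pi (k : ℤ) : |Real.cos (k * π)| = 1 := by
  have h1 : Real.sin (k * π) = 0 := Real.sin_int_mul_pi k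
  have h2 : Real.sin (k * π) ^ 2 + Real.cos (k * π) ^ 2 = 1 := Real.sin_sq_add_cos_sq _
  rw [h1] at h2
  have h3 : Real.cos (k * π) ^ 2 = 1 := by linarith
  rw [← Real.sqrt_sq_eq_abs, h3, Real.sqrt_one]

lemma cos_meas (φ s : ℝ) (hs : 0 ≤ s) :
    volume ({θ : ℝ | |Real.cos (θ - φ)| ≤ s} ∩ Set.Ioc 0 π) ≤ ENNReal.ofReal (2 * (π * s)) := by
  have hπ0 : (0:ℝ) < π := Real.pi_pos
  set k₁ : ℤ := ⌊-φ / π⌋ with hk₁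
  have hsub : {θ : ℝ | |Real.cos (θ - φ)| ≤ s} ∩ Set.Ioc 0 π ⊆
      Metric.closedBall (φ + π/2 + (k₁:ℝ) * π) (π * s / 2) ∪
        Metric.closedBall (φ + π/2 + ((k₁:ℝ) + 1) * π) (π * s / 2) := by
    rintro θ ⟨hθ, h0, hπ⟩
    simp only [Set.mem_setOf_eq] at hθ
    set u : ℝ := θ - φ with hu
    set k : ℤ := ⌊u / π⌋ with hk
    set t : ℝ := u - π/2 - k * π with ht
    clear_value t
    have h1 : (k:ℝ) ≤ u / π := Int.floor_le _
    have h2 : u / π < k + 1 := Int.lt_floor_add_one _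
    have h1' : (k:ℝ) * π ≤ u := by
      have := mul_le_mul_of_nonneg_right h1 hπ0.le
      rwa [div_mul_cancel₀ _ hπ0.ne'] at this
    have h2' : u < ((k:ℝ) + 1) * π := by
      have := mul_lt_mul_of_pos_right h2 hπ0
      rwa [div_mul_cancel₀ _ hπ0.ne'] at this
    have ht1 : -(π/2) ≤ t := by rw [ht]; linarith
    have ht2 : t ≤ π/2 := by rw [ht]; nlinarith
    have hcos : |Real.cos u| = |Real.sin t| := by
      have hu' : u = (t + π/2) + k * π := by rw [ht]; ring
      rw [hu', Real.cos_add, Real.sin_int_mul_pi, mul_zero, sub_zero, abs_mul,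
        abs_cos_int_mul_pi, mul_one, Real.cos_add_pi_div_two, abs_neg]
    have habs : |Real.sin t| ≤ s := by rw [← hcos]; exact hθ
    have hsin_abs : |Real.sin t| = Real.sin |t| := by
      rcases le_total 0 t with h | h
      · rw [abs_of_nonneg h, abs_of_nonneg (Real.sin_nonneg_of_nonneg_of_le_pi h (by linarith))]
      · have hnt : 0 ≤ Real.sin (-t) :=
          Real.sin_nonneg_of_nonneg_of_le_pi (by linarith) (by linarith)
        rw [Real.sin_neg] at hnt
        rw [abs_of_nonpos h, Real.sin_neg, abs_of_nonpos (by linarith)]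
    have hjordan : 2 / π * |t| ≤ Real.sin |t| :=
      Real.mul_le_sin (abs_nonneg t) (abs_le.2 ⟨ht1, ht2⟩)
    have htle : |t| ≤ π * s / 2 := by
      have h5 : 2 / π * |t| ≤ s := by
        calc 2 / π * |t| ≤ Real.sin |t| := hjordan
          _ = |Real.sin t| := hsin_abs.symm
          _ ≤ s := habs
      have h6 : 2 * |t| ≤ π * s := by
        have := mul_le_mul_of_nonneg_right h5 hπ0.le
        calc 2 * |t| = 2 / π * |t| * π := by field_simp
          _ ≤ s * π := this
          _ = π * s := by ring
      linarith
    have hk1le : k₁ ≤ k := by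
      apply Int.floor_le_floor
      exact (div_le_div_iff_of_pos_right hπ0).mpr (by rw [hu]; linarith)
    have hkle : k ≤ k₁ + 1 := by
      have e1 : u / π ≤ -φ / π + 1 := by
        have : u / π ≤ (-φ + π) / π := (div_le_div_iff_of_pos_right hπ0).mpr (by rw [hu]; linarith)
        rwa [add_div, div_self hπ0.ne'] at this
      calc k = ⌊u / π⌋ := hk
        _ ≤ ⌊-φ / π + 1⌋ := Int.floor_le_floor e1
        _ = k₁ + 1 := by rw [Int.floor_add_one]
    have hdist : ∀ k' : ℤ, k = k' → θ ∈ Metric.closedBall (φ + π/2 + (k':ℝ) * π) (π * s / 2) := by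
      intro k' hkk
      rw [Metric.mem_closedBall, Real.dist_eq]
      have : θ - (φ + π/2 + (k':ℝ) * π) = t := by
        rw [ht, hu, ← hkk]; ring
      rw [this]; exact htle
    rcases (by omega : k = k₁ ∨ k = k₁ + 1) with hkk | hkk
    · exact Or.inl (hdist k₁ hkk)
    · have := hdist (k₁ + 1) hkk
      push_cast at this
      exact Or.inr this
  calc volume ({θ : ℝ | |Real.cos (θ - φ)| ≤ s} ∩ Set.Ioc 0 π)
      ≤ volume (Metric.closedBall (φ + π/2 + (k₁:ℝ) * π) (π * s / 2) ∪
          Metric.closedBall (φ + π/2 + ((k₁:ℝ) + 1) * π) (π * s / 2)) := measure_mono hsub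
    _ ≤ volume (Metric.closedBall (φ + π/2 + (k₁:ℝ) * π) (π * s / 2)) +
          volume (Metric.closedBall (φ + π/2 + ((k₁:ℝ) + 1) * π) (π * s / 2)) := measure_union_le _ _
    _ = ENNReal.ofReal (2 * (π * s / 2)) + ENNReal.ofReal (2 * (π * s / 2)) := by
        rw [Real.volume_closedBall, Real.volume_closedBall]
    _ = ENNReal.ofReal (2 * (π * s / 2) + 2 * (π * s / 2)) := by
        rw [ENNReal.ofReal_add (by positivity) (by positivity)]
    _ ≤ ENNReal.ofReal (2 * (π * s)) := by
        apply ENNReal.ofReal_le_ofReal; ring_nf; exact le_refl _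

end CP
namespace CP
open Finset

lemma hpair_intervalIntegrable {n : ℕ} (p q : W n) :
    IntervalIntegrable (hpair n p q) volume 0 π :=
  (hpair_continuous p q).intervalIntegrable 0 π

lemma pair_triv {n : ℕ} (p q : W n) :
    (∫ θ in (0:ℝ)..π, hpair n p q θ) ≤ π * (2 * del n) := by
  have h := intervalIntegral.integral_mono_on (a := 0) (b := π) (μ := volume)
      (f := hpair n p q) (g := fun _ => 2 * del n) Real.pi_pos.le
      (hpair_intervalIntegrable p q) (intervalIntegrable_const)
      (fun θ _ => hpair_le p q θ)
  have e2 : (∫ θ in (0:ℝ)..π, (fun _ : ℝ => 2 * del n) θ) = π * (2 * del n) := by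
    simp; ring
  calc (∫ θ in (0:ℝ)..π, hpair n p q θ) ≤ ∫ θ in (0:ℝ)..π, (fun _ : ℝ => 2 * del n) θ := h
    _ = π * (2 * del n) := e2

lemma pair_sep {n : ℕ} (p q : W n) (e : ℝ) (he : 0 < e)
    (hmax : e ≤ max |cantorX p.1 - cantorX q.1| |cantorX p.2 - cantorX q.2|) :
    (∫ θ in (0:ℝ)..π, hpair n p q θ) ≤ 8 * π * (del n) ^ 2 / e := by
  have hπ0 : (0:ℝ) < π := Real.pi_pos
  have hδ : (0:ℝ) < del n := del_pos
  set Dx : ℝ := cantorX p.1 - cantorX q.1 with hDx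
  set Dy : ℝ := cantorX p.2 - cantorX q.2 with hDy
  set z : ℂ := ⟨Dx, Dy⟩ with hz
  have hzre : z.re = Dx := rfl
  have hzim : z.im = Dy := rfl
  have hzne : z ≠ 0 := by
    intro h
    rw [Complex.ext_iff] at h
    simp only [hzre, hzim, Complex.zero_re, Complex.zero_im] at h
    rw [h.1, h.2] at hmax
    simp at hmax
    linarith
  set R : ℝ := ‖z‖ with hR
  have hRpos : 0 < R := norm_pos_iff.mpr hzne
  have heR : e ≤ R := by
    rcases max_cases |Dx| |Dy| with ⟨hm, _⟩ | ⟨hm, _⟩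
    · rw [hm] at hmax; exact hmax.trans ((hzre ▸ Complex.abs_re_le_norm z))
    · rw [hm] at hmax; exact hmax.trans ((hzim ▸ Complex.abs_im_le_norm z))
  set φ : ℝ := Complex.arg z with hφ
  have hcosφ : Real.cos φ = Dx / R := by rw [hφ, Complex.cos_arg hzne, hzre, hR]
  have hsinφ : Real.sin φ = Dy / R := by rw [hφ, Complex.sin_arg z, hzim, hR]
  have hct : ∀ θ : ℝ, ctr n θ p - ctr n θ q = R * Real.cos (θ - φ) := by
    intro θ
    have h1 : ctr n θ p - ctr n θ q = Dx * Real.cos θ + Dy * Real.sin θ := by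
      rw [hDx, hDy]; unfold ctr; ring
    rw [h1, Real.cos_sub, hcosφ, hsinφ]
    field_simp
  set s : ℝ := 2 * del n / e with hs
  have hs0 : 0 ≤ s := by positivity
  set E : Set ℝ := {θ : ℝ | |Real.cos (θ - φ)| ≤ s} with hE
  have hEmeas : MeasurableSet E := by
    apply measurableSet_le
    · exact ((Real.continuous_cos.comp (continuous_id.sub continuous_const)).abs).measurable
    · exact measurable_const
  have hpt : ∀ θ ∈ Set.Icc (0:ℝ) π, hpair n p q θ ≤ (2 * del n) * E.indicator (fun _ => (1:ℝ)) θ := by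
    intro θ _
    by_cases hθE : θ ∈ E
    · rw [Set.indicator_of_mem hθE, mul_one]
      exact hpair_le p q θ
    · rw [Set.indicator_of_notMem hθE, mul_zero]
      simp only [hE, Set.mem_setOf_eq, not_le] at hθE
      have h1 : |ctr n θ p - ctr n θ q| = R * |Real.cos (θ - φ)| := by
        rw [hct θ, abs_mul, abs_of_pos hRpos]
      have h2 : 2 * del n < |ctr n θ p - ctr n θ q| := by
        rw [h1]
        calc 2 * del n = e * s := by rw [hs]; field_simp
          _ < e * |Real.cos (θ - φ)| := by
              apply mul_lt_mul_of_pos_left hθE he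
          _ ≤ R * |Real.cos (θ - φ)| := by
              apply mul_le_mul_of_nonneg_right heR (abs_nonneg _)
      unfold hpair
      apply max_le le_rfl
      have := rad_le (n := n) θ
      have := rad_nonneg (n := n) θ
      linarith
  have hindint : IntervalIntegrable (fun θ => (2 * del n) * E.indicator (fun _ => (1:ℝ)) θ) volume 0 π := by
    rw [intervalIntegrable_iff_integrableOn_Ioc_of_le hπ0.le]
    apply MeasureTheory.Integrable.const_mul
    exact (integrableOn_const (C := (1:ℝ)) measure_Ioc_lt_top.ne).indicator hEmeas
  have hstep1 : (∫ θ in (0:ℝ)..π, hpair n p q θ)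
      ≤ ∫ θ in (0:ℝ)..π, (2 * del n) * E.indicator (fun _ => (1:ℝ)) θ :=
    intervalIntegral.integral_mono_on hπ0.le (hpair_intervalIntegrable p q) hindint hpt
  have hstep2 : (∫ θ in (0:ℝ)..π, (2 * del n) * E.indicator (fun _ => (1:ℝ)) θ)
      = (2 * del n) * (volume (E ∩ Set.Ioc 0 π)).toReal := by
    rw [intervalIntegral.integral_const_mul, intervalIntegral.integral_of_le hπ0.le]
    congr 1
    have : (∫ θ in Set.Ioc (0:ℝ) π, E.indicator (fun _ => (1:ℝ)) θ)
        = ((volume.restrict (Set.Ioc (0:ℝ) π)) E).toReal := integral_indicator_one hEmeas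
    rw [this, Measure.restrict_apply hEmeas]
  have hstep3 : (volume (E ∩ Set.Ioc 0 π)).toReal ≤ 2 * (π * s) := by
    apply ENNReal.toReal_le_of_le_ofReal (by positivity)
    exact cos_meas φ s hs0
  calc (∫ θ in (0:ℝ)..π, hpair n p q θ)
      ≤ (2 * del n) * (volume (E ∩ Set.Ioc 0 π)).toReal := hstep1.trans (le_of_eq hstep2)
    _ ≤ (2 * del n) * (2 * (π * s)) := by
        apply mul_le_mul_of_nonneg_left hstep3 (by positivity)
    _ = 8 * π * (del n) ^ 2 / e := by rw [hs]; field_simp; ring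

end CP
namespace CP
open Finset

lemma tail_le (m N : ℕ) :
    (∑ i ∈ Finset.range N, (if m < i then 3 * (4:ℝ) ^ (-(i:ℤ) - 1) else 0))
      ≤ (4:ℝ) ^ (-(m:ℤ) - 1) := by
  have h1 : (∑ i ∈ Finset.range N, (if m < i then 3 * (4:ℝ) ^ (-(i:ℤ) - 1) else 0))
      = ∑ i ∈ (Finset.range N).filter (fun i => m < i), 3 * (4:ℝ) ^ (-(i:ℤ) - 1) := by
    rw [Finset.sum_filter]
  have h2 : (Finset.range N).filter (fun i => m < i) = Finset.Ico (m+1) N := by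
    ext i; simp [Finset.mem_Ico, Finset.mem_range]; omega
  rw [h1, h2, Finset.sum_Ico_eq_sum_range]
  have h3 : ∀ j : ℕ, 3 * (4:ℝ) ^ (-((m + 1 + j : ℕ):ℤ) - 1)
      = 3 * (4:ℝ) ^ (-(m:ℤ) - 2) * (1/4) ^ j := by
    intro j
    have : (-((m + 1 + j : ℕ):ℤ) - 1) = (-(m:ℤ) - 2) + (-(j:ℤ)) := by push_cast; ring
    rw [this, zpow_add₀ (by norm_num : (4:ℝ) ≠ 0)]
    have : (4:ℝ) ^ (-(j:ℤ)) = (1/4) ^ j := by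
      rw [zpow_neg, zpow_natCast, one_div, inv_pow]
    rw [this]; ring
  calc (∑ j ∈ Finset.range (N - (m+1)), 3 * (4:ℝ) ^ (-((m + 1 + j : ℕ):ℤ) - 1))
      = ∑ j ∈ Finset.range (N - (m+1)), 3 * (4:ℝ) ^ (-(m:ℤ) - 2) * (1/4) ^ j := by
        exact Finset.sum_congr rfl fun j _ => h3 j
    _ = 3 * (4:ℝ) ^ (-(m:ℤ) - 2) * ∑ j ∈ Finset.range (N - (m+1)), (1/4:ℝ) ^ j := by
        rw [Finset.mul_sum]
    _ ≤ 3 * (4:ℝ) ^ (-(m:ℤ) - 2) * (4/3) := by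
        apply mul_le_mul_of_nonneg_left _ (by positivity)
        rw [geom_sum_eq (by norm_num : (1/4:ℝ) ≠ 1)]
        have hp : (0:ℝ) ≤ (1/4:ℝ) ^ (N - (m+1)) := by positivity
        rw [div_le_iff_of_neg (by norm_num : (1/4:ℝ) - 1 < 0)]
        linarith
    _ = (4:ℝ) ^ (-(m:ℤ) - 1) := by
        have : (-(m:ℤ) - 1) = (-(m:ℤ) - 2) + 1 := by ring
        rw [this, zpow_add₀ (by norm_num : (4:ℝ) ≠ 0), zpow_one]
        ring

lemma dig_ne {b b' : Bool} (h : b ≠ b') : |dig b - dig b'| = 3 := by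
  cases b <;> cases b' <;> simp_all [dig] <;> norm_num

lemma dig_le (b b' : Bool) : |dig b - dig b'| ≤ 3 := by
  cases b <;> cases b' <;> simp [dig] <;> norm_num

lemma cantorX_sep {n : ℕ} (a a' : Fin n → Bool) (m : Fin n)
    (hlow : ∀ i : Fin n, (i:ℕ) < (m:ℕ) → a i = a' i) (hm : a m ≠ a' m) :
    2 * (4:ℝ) ^ (-((m:ℕ):ℤ) - 1) ≤ |cantorX a - cantorX a'| := by
  classical
  set t : Fin n → ℝ := fun j => (dig (a j) - dig (a' j)) * (4:ℝ) ^ (-((j:ℕ):ℤ) - 1) with htdef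
  have hS : cantorX a - cantorX a' = ∑ j : Fin n, t j := by
    rw [cantorX, cantorX, ← Finset.sum_sub_distrib]
    apply Finset.sum_congr rfl
    intro j _
    have : (-(((j:ℕ):ℤ) + 1)) = (-((j:ℕ):ℤ) - 1) := by ring
    rw [htdef, ← sub_mul, this]
  have htm : |t m| = 3 * (4:ℝ) ^ (-((m:ℕ):ℤ) - 1) := by
    rw [htdef, abs_mul, dig_ne hm, abs_of_pos (by positivity : (0:ℝ) < (4:ℝ) ^ (-((m:ℕ):ℤ) - 1))]
  have hsplit : (∑ j : Fin n, t j) = t m + ∑ j ∈ Finset.univ.erase m, t j := by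
    rw [← Finset.sum_erase_add Finset.univ t (Finset.mem_univ m)]; ring
  have htail : (∑ j ∈ Finset.univ.erase m, |t j|) ≤ (4:ℝ) ^ (-((m:ℕ):ℤ) - 1) := by
    have hb : ∀ j ∈ Finset.univ.erase m, |t j| ≤
        (if (m:ℕ) < (j:ℕ) then 3 * (4:ℝ) ^ (-((j:ℕ):ℤ) - 1) else 0) := by
      intro j hj
      have hjm : j ≠ m := Finset.ne_of_mem_erase hj
      rcases lt_or_gt_of_ne (fun h => hjm (Fin.ext h) : (j:ℕ) ≠ (m:ℕ)) with h | h
      · rw [if_neg (by omega), htdef]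
        simp only
        rw [hlow j h, sub_self, zero_mul, abs_zero]
      · rw [if_pos h, htdef]
        simp only
        rw [abs_mul, abs_of_pos (by positivity : (0:ℝ) < (4:ℝ) ^ (-((j:ℕ):ℤ) - 1))]
        exact mul_le_mul_of_nonneg_right (dig_le _ _) (by positivity)
    calc (∑ j ∈ Finset.univ.erase m, |t j|)
        ≤ ∑ j ∈ Finset.univ.erase m, (if (m:ℕ) < (j:ℕ) then 3 * (4:ℝ) ^ (-((j:ℕ):ℤ) - 1) else 0) :=
          Finset.sum_le_sum hb
      _ ≤ ∑ j : Fin n, (if (m:ℕ) < (j:ℕ) then 3 * (4:ℝ) ^ (-((j:ℕ):ℤ) - 1) else 0) := by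
          apply Finset.sum_le_sum_of_subset_of_nonneg (Finset.erase_subset _ _)
          intro j _ _
          split <;> positivity
      _ = ∑ i ∈ Finset.range n, (if (m:ℕ) < i then 3 * (4:ℝ) ^ (-(i:ℤ) - 1) else 0) :=
          Fin.sum_univ_eq_sum_range (fun i => if (m:ℕ) < i then 3 * (4:ℝ) ^ (-(i:ℤ) - 1) else 0) n
      _ ≤ (4:ℝ) ^ (-((m:ℕ):ℤ) - 1) := tail_le (m:ℕ) n
  have habs : |∑ j ∈ Finset.univ.erase m, t j| ≤ (4:ℝ) ^ (-((m:ℕ):ℤ) - 1) :=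
    le_trans (Finset.abs_sum_le_sum_abs _ _) htail
  rw [hS, hsplit]
  have h1 : |t m| - |∑ j ∈ Finset.univ.erase m, t j| ≤ |t m + ∑ j ∈ Finset.univ.erase m, t j| := by
    have := abs_add_le (t m + ∑ j ∈ Finset.univ.erase m, t j) (-(∑ j ∈ Finset.univ.erase m, t j))
    simp only [add_neg_cancel_right, abs_neg] at this
    linarith
  rw [htm] at h1
  linarith

lemma one_add_three_geom (M : ℕ) :
    (1:ℝ) + 3 * (∑ k ∈ Finset.range M, (4:ℝ) ^ k) = 4 ^ M := by
  induction M with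
  | zero => simp
  | succ M ih =>
    rw [Finset.sum_range_succ, pow_succ]
    nlinarith [ih]

end CP
namespace CP
open Finset

def agree (n : ℕ) (p q : W n) (k : ℕ) : Prop :=
  ∀ i : Fin n, (i:ℕ) ≤ k → p.1 i = q.1 i ∧ p.2 i = q.2 i

instance (n : ℕ) (p q : W n) : DecidablePred (agree n p q) := fun _ =>
  Fintype.decidableForallFintype

lemma pair_main {n : ℕ} (p q : W n) :
    (∫ θ in (0:ℝ)..π, hpair n p q θ)
      ≤ 16 * π * (del n) ^ 2 *
        (1 + 3 * ∑ k ∈ Finset.range n, (if agree n p q k then (4:ℝ) ^ k else 0)) := by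
  classical
  have hπ0 : (0:ℝ) < π := Real.pi_pos
  have hδ : (0:ℝ) < del n := del_pos
  by_cases hall : ∀ k ∈ Finset.range n, agree n p q k
  · have hsum : (∑ k ∈ Finset.range n, (if agree n p q k then (4:ℝ) ^ k else 0))
        = ∑ k ∈ Finset.range n, (4:ℝ) ^ k :=
      Finset.sum_congr rfl fun k hk => if_pos (hall k hk)
    rw [hsum, one_add_three_geom]
    have hd4 : del n * 4 ^ n = 1 := by
      rw [del]
      rw [← zpow_natCast (4:ℝ) n, ← zpow_add₀ (by norm_num : (4:ℝ) ≠ 0)]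
      simp
    calc (∫ θ in (0:ℝ)..π, hpair n p q θ) ≤ π * (2 * del n) := pair_triv p q
      _ ≤ 16 * π * (del n) ^ 2 * 4 ^ n := by
          have h2 : 16 * π * (del n)^2 * 4^n = 16 * π * del n * (del n * 4 ^ n) := by ring
          rw [h2, hd4, mul_one]
          nlinarith [mul_pos hπ0 hδ]
  · push_neg at hall
    obtain ⟨k₀, hk₀n, hk₀⟩ := hall
    have hex : ∃ k, ¬ agree n p q k := ⟨k₀, hk₀⟩
    set m : ℕ := Nat.find hex with hmdef
    have hnotm : ¬ agree n p q m := Nat.find_spec hex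
    have hmin : ∀ j, j < m → agree n p q j := fun j hj => not_not.1 (Nat.find_min hex hj)
    have hmlt : m < n := lt_of_le_of_lt (Nat.find_min' hex hk₀) (Finset.mem_range.1 hk₀n)
    -- extract the differing index
    rw [agree] at hnotm
    push_neg at hnotm
    obtain ⟨i, hile, hio⟩ := hnotm
    have hieq : (i:ℕ) = m := by
      rcases lt_or_eq_of_le hile with h | h
      · have hb := (hmin (i:ℕ) h) i le_rfl
        exact absurd hb.2 (hio hb.1)
      · exact h
    have hlow1 : ∀ j : Fin n, (j:ℕ) < (i:ℕ) → p.1 j = q.1 j := by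
      intro j hj
      exact ((hmin (j:ℕ) (hieq ▸ hj)) j le_rfl).1
    have hlow2 : ∀ j : Fin n, (j:ℕ) < (i:ℕ) → p.2 j = q.2 j := by
      intro j hj
      exact ((hmin (j:ℕ) (hieq ▸ hj)) j le_rfl).2
    have hsep : 2 * (4:ℝ) ^ (-(m:ℤ) - 1) ≤ max |cantorX p.1 - cantorX q.1| |cantorX p.2 - cantorX q.2| := by
      by_cases h1 : p.1 i = q.1 i
      · refine le_trans ?_ (le_max_right _ _)
        have := cantorX_sep p.2 q.2 i hlow2 (hio h1)
        rwa [hieq] at this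
      · refine le_trans ?_ (le_max_left _ _)
        have := cantorX_sep p.1 q.1 i hlow1 h1
        rwa [hieq] at this
    have he : (0:ℝ) < 2 * (4:ℝ) ^ (-(m:ℤ) - 1) := by positivity
    have hbound := pair_sep p q _ he hsep
    -- compute the RHS
    have hsum : (∑ k ∈ Finset.range n, (if agree n p q k then (4:ℝ) ^ k else 0))
        = ∑ k ∈ Finset.range m, (4:ℝ) ^ k := by
      have hiff : ∀ k, agree n p q k ↔ k < m := by
        intro k
        constructor
        · intro h
          by_contra hk
          push_neg at hk
          exact (fun i hi => h i (le_trans hi hk)) |> fun h' => (Nat.find_spec hex) h'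
        · exact fun hk => hmin k hk
      have h1 : (∑ k ∈ Finset.range n, (if agree n p q k then (4:ℝ) ^ k else 0))
          = ∑ k ∈ Finset.range n, (if k < m then (4:ℝ) ^ k else 0) := by
        apply Finset.sum_congr rfl
        intro k _
        by_cases h : agree n p q k
        · rw [if_pos h, if_pos ((hiff k).1 h)]
        · rw [if_neg h, if_neg (fun hk => h ((hiff k).2 hk))]
      rw [h1]
      rw [← Finset.sum_subset (Finset.range_subset_range.2 hmlt.le)]
      · apply Finset.sum_congr rfl
        intro k hk
        exact if_pos (Finset.mem_range.1 hk)
      · intro k _ hk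
        exact if_neg (fun h => hk (Finset.mem_range.2 h))
    rw [hsum, one_add_three_geom]
    refine hbound.trans ?_
    -- 8π δ² / (2·4^{-m-1}) = 16 π δ² 4^m
    have h4 : (4:ℝ) ^ (-(m:ℤ) - 1) = ((4:ℝ) ^ (m+1))⁻¹ := by
      rw [← zpow_natCast (4:ℝ) (m+1), ← zpow_neg]
      congr 1
      push_cast
      ring
    have hpow : (4:ℝ) ^ (m+1) = 4 * 4 ^ m := by rw [pow_succ]; ring
    apply le_of_eq
    rw [h4, hpow]
    have h40 : (4:ℝ) ^ m ≠ 0 := by positivity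
    field_simp
    ring

end CP
namespace CP
open Finset

lemma card_high (n k : ℕ) (hk : k < n) :
    Fintype.card {i : Fin n // k < (i:ℕ)} = n - (k+1) := by
  have e : {i : Fin n // k < (i:ℕ)} ≃ Fin (n - (k+1)) :=
    { toFun := fun i => ⟨(i.1 : ℕ) - (k+1), by have := i.1.isLt; have := i.2; omega⟩
      invFun := fun j => ⟨⟨k + 1 + (j : ℕ), by have := j.isLt; omega⟩, by
        show k < k + 1 + (j : ℕ); omega⟩
      left_inv := fun i => by
        apply Subtype.ext
        apply Fin.ext
        have := i.2
        simp only
        omega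
      right_inv := fun j => by
        apply Fin.ext
        simp only
        omega }
  rw [Fintype.card_congr e, Fintype.card_fin]

lemma card_agree {n : ℕ} (k : ℕ) (hk : k < n) :
    ((Finset.univ : Finset (W n × W n)).filter (fun w => agree n w.1 w.2 k)).card
      ≤ 2^n * 2^n * (2^(n-(k+1)) * 2^(n-(k+1))) := by
  classical
  set S := {i : Fin n // k < (i:ℕ)} with hS
  set ψ : W n × W n → (W n × ((S → Bool) × (S → Bool))) :=
    fun w => (w.1, (fun i => w.2.1 i.1, fun i => w.2.2 i.1)) with hψ
  have hinj : Set.InjOn ψ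
      ↑((Finset.univ : Finset (W n × W n)).filter (fun w => agree n w.1 w.2 k)) := by
    intro w hw w' hw' hψw
    simp only [Finset.coe_filter, Set.mem_setOf_eq, Finset.mem_univ, true_and] at hw hw'
    simp only [hψ, Prod.mk.injEq] at hψw
    obtain ⟨h1, h2, h3⟩ := hψw
    have h4 : w.2 = w'.2 := by
      apply Prod.ext
      · funext i
        by_cases hik : (i:ℕ) ≤ k
        · rw [← (hw i hik).1, ← (hw' i hik).1, h1]
        · exact congrFun h2 ⟨i, by omega⟩
      · funext i
        by_cases hik : (i:ℕ) ≤ k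
        · rw [← (hw i hik).2, ← (hw' i hik).2, h1]
        · exact congrFun h3 ⟨i, by omega⟩
    exact Prod.ext h1 h4
  have hcard := Finset.card_le_card_of_injOn ψ (fun w _ => Finset.mem_univ (ψ w)) hinj
  refine hcard.trans ?_
  rw [Finset.card_univ]
  simp only [Fintype.card_prod, Fintype.card_fun, Fintype.card_bool, Fintype.card_fin,
    card_high n k hk, hS]
  exact le_of_eq (by ring)

end CP


/-- There exists `C > 0` such that for every `n ≥ 1`,
`∫₀^π ∫_ℝ f_{n,θ}(x)² dx dθ ≤ C · n`. -/
theorem integral_projMultiplicity_sq_le : ∃ C : ℝ, 0 < C ∧ ∀ n : ℕ, 1 ≤ n →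
    (∫ θ in (0 : ℝ)..π, ∫ x : ℝ, (projMultiplicity n θ x : ℝ) ^ 2) ≤ C * n := by
  classical
  refine ⟨32 * π, by positivity, ?_⟩
  intro n hn
  have hπ0 : (0:ℝ) < π := Real.pi_pos
  have hδ : (0:ℝ) < CP.del n := CP.del_pos
  have hn1 : (1:ℝ) ≤ (n:ℝ) := by exact_mod_cast hn
  set G : ℝ → ℝ := fun θ => ∑ w : CP.W n × CP.W n, CP.hpair n w.1 w.2 θ with hG
  have hGcont : Continuous G := continuous_finset_sum _ (fun w _ => CP.hpair_continuous w.1 w.2)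
  have step1 : (∫ θ in (0:ℝ)..π, ∫ x : ℝ, (projMultiplicity n θ x : ℝ) ^ 2)
      ≤ ∫ θ in (0:ℝ)..π, G θ := by
    rw [intervalIntegral.integral_of_le hπ0.le, intervalIntegral.integral_of_le hπ0.le]
    apply integral_mono_of_nonneg
    · exact Filter.Eventually.of_forall fun θ => integral_nonneg fun x => sq_nonneg _
    · exact hGcont.integrableOn_Ioc
    · exact Filter.Eventually.of_forall fun θ => CP.inner_le θ
  have step2 : (∫ θ in (0:ℝ)..π, G θ)
      = ∑ w : CP.W n × CP.W n, ∫ θ in (0:ℝ)..π, CP.hpair n w.1 w.2 θ := by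
    rw [hG]
    exact intervalIntegral.integral_finset_sum
      (fun w _ => CP.hpair_intervalIntegrable w.1 w.2)
  have step3 : (∑ w : CP.W n × CP.W n, ∫ θ in (0:ℝ)..π, CP.hpair n w.1 w.2 θ)
      ≤ ∑ w : CP.W n × CP.W n, 16 * π * (CP.del n)^2 *
          (1 + 3 * ∑ k ∈ Finset.range n, (if CP.agree n w.1 w.2 k then (4:ℝ)^k else 0)) :=
    Finset.sum_le_sum fun w _ => CP.pair_main w.1 w.2
  -- counting
  set c4 : ℝ := ((2:ℝ)^n)^4 with hc4
  have hd4 : CP.del n * 4 ^ n = 1 := by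
    rw [CP.del, ← zpow_natCast (4:ℝ) n, ← zpow_add₀ (by norm_num : (4:ℝ) ≠ 0)]
    simp
  have h24 : ((2:ℝ)^n)^2 = 4^n := by rw [sq, ← mul_pow]; norm_num
  have hδc : (CP.del n)^2 * c4 = 1 := by
    calc (CP.del n)^2 * c4 = (CP.del n * ((2:ℝ)^n)^2)^2 := by rw [hc4]; ring
      _ = (CP.del n * 4^n)^2 := by rw [h24]
      _ = 1 := by rw [hd4]; norm_num
  have hcardW : ((Fintype.card (CP.W n × CP.W n) : ℕ) : ℝ) = c4 := by
    simp only [Fintype.card_prod, Fintype.card_fun, Fintype.card_bool, Fintype.card_fin]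
    push_cast
    rw [hc4]
    ring
  have hWk : ∀ k ∈ Finset.range n,
      (∑ w : CP.W n × CP.W n, (if CP.agree n w.1 w.2 k then (4:ℝ)^k else 0)) ≤ c4 / 4 := by
    intro k hk
    have hkn : k < n := Finset.mem_range.1 hk
    have h1 : (∑ w : CP.W n × CP.W n, (if CP.agree n w.1 w.2 k then (4:ℝ)^k else 0))
        = (4:ℝ)^k * (((Finset.univ : Finset (CP.W n × CP.W n)).filter
            (fun w => CP.agree n w.1 w.2 k)).card : ℝ) := by
      rw [← Finset.sum_filter, Finset.sum_const, nsmul_eq_mul, mul_comm]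
    rw [h1]
    have h2 : (((Finset.univ : Finset (CP.W n × CP.W n)).filter
          (fun w => CP.agree n w.1 w.2 k)).card : ℝ)
        ≤ (2:ℝ)^n * 2^n * (2^(n-(k+1)) * 2^(n-(k+1))) := by
      exact_mod_cast CP.card_agree k hkn
    have h3 : (4:ℝ)^k * (((Finset.univ : Finset (CP.W n × CP.W n)).filter
          (fun w => CP.agree n w.1 w.2 k)).card : ℝ)
        ≤ (4:ℝ)^k * ((2:ℝ)^n * 2^n * (2^(n-(k+1)) * 2^(n-(k+1)))) :=
      mul_le_mul_of_nonneg_left h2 (by positivity)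
    refine h3.trans (le_of_eq ?_)
    set y : ℝ := (2:ℝ)^k with hy
    set A : ℝ := (2:ℝ)^(n-(k+1)) with hA
    have hx : (2:ℝ)^n = A * (2 * y) := by
      rw [hA, hy, ← pow_succ', ← pow_add]
      congr 1
      omega
    have h4k : (4:ℝ)^k = y * y := by rw [hy, ← mul_pow]; norm_num
    rw [h4k, hc4, hx]
    have hy0 : y ≠ 0 := by rw [hy]; positivity
    field_simp
    ring
  have step4 : (∑ w : CP.W n × CP.W n, 16 * π * (CP.del n)^2 *
        (1 + 3 * ∑ k ∈ Finset.range n, (if CP.agree n w.1 w.2 k then (4:ℝ)^k else 0)))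
      ≤ 32 * π * n := by
    rw [← Finset.mul_sum, Finset.sum_add_distrib, Finset.sum_const, Finset.card_univ,
      ← Finset.mul_sum, Finset.sum_comm]
    have hbound : (∑ k ∈ Finset.range n, ∑ w : CP.W n × CP.W n,
        (if CP.agree n w.1 w.2 k then (4:ℝ)^k else 0)) ≤ (n:ℝ) * (c4 / 4) := by
      calc _ ≤ ∑ k ∈ Finset.range n, c4 / 4 := Finset.sum_le_sum hWk
        _ = (n:ℝ) * (c4 / 4) := by rw [Finset.sum_const, Finset.card_range, nsmul_eq_mul]
    have hsmul : ((Fintype.card (CP.W n × CP.W n)) • (1:ℝ)) = c4 := by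
      rw [nsmul_eq_mul, mul_one, hcardW]
    rw [hsmul]
    have hmono : c4 + 3 * (∑ k ∈ Finset.range n, ∑ w : CP.W n × CP.W n,
        (if CP.agree n w.1 w.2 k then (4:ℝ)^k else 0)) ≤ c4 + 3 * ((n:ℝ) * (c4 / 4)) := by
      linarith
    calc 16 * π * (CP.del n)^2 * (c4 + 3 * (∑ k ∈ Finset.range n, ∑ w : CP.W n × CP.W n,
            (if CP.agree n w.1 w.2 k then (4:ℝ)^k else 0)))
        ≤ 16 * π * (CP.del n)^2 * (c4 + 3 * ((n:ℝ) * (c4 / 4))) := by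
          apply mul_le_mul_of_nonneg_left hmono (by positivity)
      _ = 16 * π * ((CP.del n)^2 * c4) + 12 * π * (n:ℝ) * ((CP.del n)^2 * c4) := by ring
      _ = 16 * π + 12 * π * (n:ℝ) := by rw [hδc]; ring
      _ ≤ 32 * π * n := by nlinarith
  calc (∫ θ in (0:ℝ)..π, ∫ x : ℝ, (projMultiplicity n θ x : ℝ) ^ 2)
      ≤ ∫ θ in (0:ℝ)..π, G θ := step1
    _ = _ := step2
    _ ≤ _ := step3
    _ ≤ 32 * π * n := step4
end
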